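/- arXiv:2402.03779 — 5 statements merged into one kernel-verified Lean document; each statement's English description precedes it below -/
import Mathlib

section
/- Let ε ∈ (0,1) and assume the cumulative distribution function F_s of s(X) is continuous. Define the plug-in rule h*_ε by h*_ε(x) = g*(x) if F_s(s(x)) ≥ 1−ε and h*_ε(x) = ℜ otherwise, where g*(x) ∈ argmax_{k∈[K]} p_k(x). Then for every measurable classifier with reject option h : 𝒳 → [K] ∪ {ℜ} satisfying P(h(X) = ℜ) = 1−ε, one has P(h*_ε(X) ≠ Y, h*_ε(X) ≠ ℜ) ≤ P(h(X) ≠ Y, h(X) ≠ ℜ); that is, h*_ε minimizes the misclassification risk among all classifiers with rejection probability exactly 1−ε. -/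
open MeasureTheory Set Filter Topology

section Aux
/-- If the set-integrals of `f` over its own preimages agree with a (sub-probability)
measure `ν`, then `f` is integrable. -/
lemma aux_integrable {Ω : Type*} [MeasurableSpace Ω] (P : Measure Ω) [IsProbabilityMeasure P]
    (f : Ω → ℝ) (hf : Measurable f) (ν : Measure Ω) (hν : ν ≤ P)
    (H : ∀ B : Set ℝ, MeasurableSet B → ∫ ω in f ⁻¹' B, f ω ∂P = (ν (f ⁻¹' B)).toReal) :
    Integrable f P := by
  -- boundedness on preimages of bounded sets gives integrability there
  have hbdd : ∀ (B : Set ℝ) (M : ℝ), MeasurableSet B → (∀ x ∈ B, |x| ≤ M) →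
      IntegrableOn f (f ⁻¹' B) P := by
    intro B M hB hM
    refine Integrable.mono' (integrable_const M) (hf.aestronglyMeasurable.restrict) ?_
    filter_upwards [ae_restrict_mem (hf hB)] with ω hω
    exact hM _ hω
  -- Step 1 : f is a.e. nonnegative
  have hneg : P {ω | f ω < 0} = 0 := by
    have key : ∀ n : ℕ, P (f ⁻¹' (Icc (-(n + 1 : ℝ)) (-(1 / (n + 1))))) = 0 := by
      intro n
      set B : Set ℝ := Icc (-(n + 1 : ℝ)) (-(1 / (n + 1))) with hBdef
      have hB : MeasurableSet B := measurableSet_Icc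
      have hint : IntegrableOn f (f ⁻¹' B) P := by
        refine hbdd B (n + 1) hB ?_
        intro x hx
        rw [abs_le]
        constructor
        · exact hx.1
        · have : (0:ℝ) < 1 / (n + 1) := by positivity
          linarith [hx.2]
      have h1 : (0:ℝ) ≤ ∫ ω in f ⁻¹' B, f ω ∂P := by
        rw [H B hB]; exact ENNReal.toReal_nonneg
      have h2 : ∫ ω in f ⁻¹' B, f ω ∂P ≤ (P (f ⁻¹' B)).toReal * (-(1 / (n + 1))) := by
        have := setIntegral_mono_on hint (integrable_const _) (hf hB)
          (fun ω hω => (mem_Icc.mp hω).2)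
        rwa [setIntegral_const, smul_eq_mul] at this
      have hpos : (0:ℝ) < 1 / (n + 1) := by positivity
      have h3 : (P (f ⁻¹' B)).toReal ≤ 0 := by nlinarith
      have h4 : (P (f ⁻¹' B)).toReal = 0 := le_antisymm h3 ENNReal.toReal_nonneg
      exact (ENNReal.toReal_eq_zero_iff _).mp h4 |>.resolve_right (measure_ne_top _ _)
    have hsub : {ω | f ω < 0} ⊆ ⋃ n : ℕ, f ⁻¹' (Icc (-(n + 1 : ℝ)) (-(1 / (n + 1)))) := by
      intro ω hω
      have hω' : (0:ℝ) < -f ω := by simpa using hω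
      obtain ⟨n₁, hn₁⟩ := exists_nat_one_div_lt hω'
      obtain ⟨n₂, hn₂⟩ := exists_nat_ge (-f ω)
      refine mem_iUnion.mpr ⟨max n₁ n₂, ?_⟩
      simp only [mem_preimage, mem_Icc]
      constructor
      · have : (n₂:ℝ) ≤ (max n₁ n₂ : ℕ) := by exact_mod_cast Nat.le_max_right n₁ n₂ |>.trans_eq rfl |> Nat.cast_le.mpr
        linarith
      · have h5 : 1 / ((max n₁ n₂ : ℕ) + 1 : ℝ) ≤ 1 / ((n₁:ℝ) + 1) := by
          apply one_div_le_one_div_of_le (by positivity)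
          have : (n₁:ℝ) ≤ (max n₁ n₂ : ℕ) := Nat.cast_le.mpr (Nat.le_max_left n₁ n₂)
          linarith
        linarith
    exact measure_mono_null hsub (measure_iUnion_null key)
  -- Step 2 : finiteness of the integral of ‖f‖
  set T : ℕ → Set Ω := fun n => f ⁻¹' (Ico (n : ℝ) (n + 1)) with hTdef
  have hTmeas : ∀ n, MeasurableSet (T n) := fun n => hf measurableSet_Ico
  have hTdisj : Pairwise (Function.onFun Disjoint T) := by
    intro m n hmn
    refine Set.disjoint_left.mpr ?_
    rintro ω ⟨h1, h2⟩ ⟨h3, h4⟩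
    rcases lt_or_gt_of_ne hmn with hc | hc
    · have : (m:ℝ) + 1 ≤ n := by exact_mod_cast hc
      linarith
    · have : (n:ℝ) + 1 ≤ m := by exact_mod_cast hc
      linarith
  have hTunion : f ⁻¹' (Ici (0:ℝ)) = ⋃ n, T n := by
    ext ω
    simp only [mem_preimage, mem_Ici, mem_iUnion, hTdef, mem_Ico]
    constructor
    · intro h0
      exact ⟨⌊f ω⌋₊, Nat.floor_le h0, Nat.lt_floor_add_one _⟩
    · rintro ⟨n, hn, -⟩
      exact le_trans (by positivity) hn
  -- bound each piece
  have hμν : ∀ n : ℕ, ENNReal.ofReal (n : ℝ) * P (T n) ≤ ν (T n) := by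
    intro n
    have hint : IntegrableOn f (T n) P := by
      refine hbdd _ (n + 1) measurableSet_Ico ?_
      intro x hx
      rw [abs_le]
      refine ⟨by linarith [hx.1, (by positivity : (0:ℝ) ≤ (n:ℝ))], hx.2.le⟩
    have h1 : (n:ℝ) * (P (T n)).toReal ≤ (ν (T n)).toReal := by
      have := setIntegral_mono_on (integrable_const ((n:ℝ))) hint (hTmeas n)
        (fun ω hω => (mem_Ico.mp hω).1)
      rw [setIntegral_const, smul_eq_mul, H _ measurableSet_Ico] at this
      rw [measureReal_def] at this
      linarith [this]
    rw [← ENNReal.toReal_le_toReal (by finiteness) (by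
      exact ne_top_of_le_ne_top (measure_ne_top P _) (hν _))]
    rw [ENNReal.toReal_mul, ENNReal.toReal_ofReal (by positivity)]
    exact h1
  have hbound : ∀ n : ℕ, ∫⁻ ω in T n, ‖f ω‖₊ ∂P ≤ P (T n) + ν (T n) := by
    intro n
    have h1 : ∫⁻ ω in T n, ‖f ω‖₊ ∂P ≤ ∫⁻ _ in T n, ENNReal.ofReal ((n:ℝ) + 1) ∂P := by
      refine lintegral_mono_ae ?_
      filter_upwards [ae_restrict_mem (hTmeas n)] with ω hω
      rcases hω with ⟨h0, h1⟩
      rw [show ((‖f ω‖₊ : ENNReal)) = ‖f ω‖ₑ from rfl, Real.enorm_eq_ofReal (by linarith [(by positivity : (0:ℝ) ≤ (n:ℝ))])]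
      exact ENNReal.ofReal_le_ofReal h1.le
    have h2 : ∫⁻ _ in T n, ENNReal.ofReal ((n:ℝ) + 1) ∂P = ENNReal.ofReal ((n:ℝ) + 1) * P (T n) := by
      rw [setLIntegral_const]
    calc ∫⁻ ω in T n, ‖f ω‖₊ ∂P ≤ ENNReal.ofReal ((n:ℝ) + 1) * P (T n) := h1.trans_eq h2
      _ = (ENNReal.ofReal (n:ℝ) + ENNReal.ofReal 1) * P (T n) := by
          rw [← ENNReal.ofReal_add (by positivity) one_pos.le]
      _ = ENNReal.ofReal (n:ℝ) * P (T n) + P (T n) := by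
          rw [add_mul, ENNReal.ofReal_one, one_mul, add_comm]
      _ ≤ ν (T n) + P (T n) := add_le_add (hμν n) le_rfl
      _ = P (T n) + ν (T n) := add_comm _ _
  have hfin : HasFiniteIntegral f P := by
    rw [HasFiniteIntegral]
    have hsplit : ∫⁻ ω, ‖f ω‖₊ ∂P =
        ∫⁻ ω in f ⁻¹' (Ici (0:ℝ)), ‖f ω‖₊ ∂P + ∫⁻ ω in (f ⁻¹' (Ici (0:ℝ)))ᶜ, ‖f ω‖₊ ∂P :=
      (lintegral_add_compl _ (hf measurableSet_Ici)).symm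
    have hcompl : (f ⁻¹' (Ici (0:ℝ)))ᶜ = {ω | f ω < 0} := by
      ext ω; simp [not_le]
    have h0 : ∫⁻ ω in (f ⁻¹' (Ici (0:ℝ)))ᶜ, ‖f ω‖₊ ∂P = 0 := by
      rw [hcompl, setLIntegral_measure_zero _ _ hneg]
    have hpos : ∫⁻ ω in f ⁻¹' (Ici (0:ℝ)), ‖f ω‖₊ ∂P ≤ 2 := by
      rw [hTunion, lintegral_iUnion hTmeas hTdisj]
      calc ∑' n, ∫⁻ ω in T n, ‖f ω‖₊ ∂P ≤ ∑' n, (P (T n) + ν (T n)) :=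
            ENNReal.tsum_le_tsum hbound
        _ = ∑' n, P (T n) + ∑' n, ν (T n) := ENNReal.tsum_add
        _ = P (⋃ n, T n) + ν (⋃ n, T n) := by
            rw [measure_iUnion hTdisj hTmeas, measure_iUnion hTdisj hTmeas]
        _ ≤ P univ + P univ := add_le_add (measure_mono (subset_univ _))
            (le_trans (Measure.le_iff'.mp hν _) (measure_mono (subset_univ _)))
        _ = 2 := by rw [measure_univ]; norm_num
    rw [show ∫⁻ a, ‖f a‖ₑ ∂P = ∫⁻ ω, ‖f ω‖₊ ∂P from rfl, hsplit, h0, add_zero]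
    exact lt_of_le_of_lt hpos (by norm_num)
  exact ⟨hf.aestronglyMeasurable, hfin⟩


lemma aux_quantile {Ω : Type*} [MeasurableSpace Ω] (P : Measure Ω) [IsProbabilityMeasure P]
    (q : Ω → ℝ) (hq : Measurable q) (Fs : ℝ → ℝ)
    (hFs : ∀ t, Fs t = (P {ω | q ω ≤ t}).toReal) (hcont : Continuous Fs)
    (c : ℝ) (hc0 : 0 < c) (hc1 : c < 1) :
    ∃ t0, (∀ u, c ≤ Fs u ↔ t0 ≤ u) ∧ (P {ω | t0 ≤ q ω}).toReal = 1 - c := by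
  have hmono : Monotone Fs := by
    intro a b hab
    rw [hFs, hFs]
    exact ENNReal.toReal_mono (measure_ne_top _ _)
      (measure_mono fun ω hω => le_trans hω hab)
  -- ∃ b, c < Fs b
  have hb : ∃ b : ℝ, c < Fs b := by
    have hmu : Monotone (fun n : ℕ => {ω | q ω ≤ (n:ℝ)}) := by
      intro m n hmn ω hω
      simp only [mem_setOf_eq] at hω ⊢
      exact le_trans hω (by exact_mod_cast hmn)
    have h1 : Tendsto (fun n : ℕ => P {ω | q ω ≤ (n:ℝ)}) atTop
        (𝓝 (P (⋃ n : ℕ, {ω | q ω ≤ (n:ℝ)}))) := tendsto_measure_iUnion_atTop hmu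
    have hU : (⋃ n : ℕ, {ω | q ω ≤ (n:ℝ)}) = univ := by
      refine eq_univ_of_forall fun ω => ?_
      obtain ⟨n, hn⟩ := exists_nat_ge (q ω)
      exact mem_iUnion.mpr ⟨n, hn⟩
    rw [hU, measure_univ] at h1
    have h2 : Tendsto (fun n : ℕ => Fs (n:ℝ)) atTop (𝓝 1) := by
      have := (ENNReal.tendsto_toReal ENNReal.one_ne_top).comp h1
      simpa [Function.comp_def, hFs] using this
    obtain ⟨n, hn⟩ := (h2.eventually (eventually_gt_nhds hc1)).exists
    exact ⟨n, hn⟩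
  -- ∃ a, Fs a < c
  have ha : ∃ a : ℝ, Fs a < c := by
    have hanti : Antitone (fun n : ℕ => {ω | q ω ≤ -(n:ℝ)}) := by
      intro m n hmn ω hω
      simp only [mem_setOf_eq] at hω ⊢
      have : (m:ℝ) ≤ n := by exact_mod_cast hmn
      linarith
    have h1 : Tendsto (fun n : ℕ => P {ω | q ω ≤ -(n:ℝ)}) atTop
        (𝓝 (P (⋂ n : ℕ, {ω | q ω ≤ -(n:ℝ)}))) :=
      tendsto_measure_iInter_atTop
        (fun n => (hq measurableSet_Iic).nullMeasurableSet) hanti ⟨0, measure_ne_top _ _⟩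
    have hI : (⋂ n : ℕ, {ω | q ω ≤ -(n:ℝ)}) = ∅ := by
      refine eq_empty_of_forall_notMem fun ω hω => ?_
      obtain ⟨n, hn⟩ := exists_nat_gt (-q ω)
      have := mem_iInter.mp hω n
      simp only [mem_setOf_eq] at this
      linarith
    rw [hI, measure_empty] at h1
    have h2 : Tendsto (fun n : ℕ => Fs (-(n:ℝ))) atTop (𝓝 0) := by
      have := (ENNReal.tendsto_toReal ENNReal.zero_ne_top).comp h1
      simpa [Function.comp_def, hFs] using this
    obtain ⟨n, hn⟩ := (h2.eventually (eventually_lt_nhds hc0)).exists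
    exact ⟨-(n:ℝ), hn⟩
  obtain ⟨b, hbb⟩ := hb
  obtain ⟨a, haa⟩ := ha
  have hab : a < b := by
    by_contra hcon
    push_neg at hcon
    exact absurd (hmono hcon) (by linarith)
  obtain ⟨t1, -, ht1⟩ := intermediate_value_Icc hab.le hcont.continuousOn
    (⟨haa.le, hbb.le⟩ : c ∈ Icc (Fs a) (Fs b))
  set S : Set ℝ := {t | c ≤ Fs t} with hSdef
  have hSne : S.Nonempty := ⟨t1, ht1.ge⟩
  have hSbdd : BddBelow S := by
    refine ⟨a, fun t ht => ?_⟩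
    by_contra hcon
    push_neg at hcon
    exact absurd (lt_of_le_of_lt ht (lt_of_le_of_lt (hmono hcon.le) haa)) (lt_irrefl c)
  have hSclosed : IsClosed S := by
    have : S = Fs ⁻¹' (Ici c) := rfl
    rw [this]
    exact isClosed_Ici.preimage hcont
  set t0 := sInf S with ht0def
  have ht0S : t0 ∈ S := hSclosed.csInf_mem hSne hSbdd
  have hle : Fs t0 ≤ c := by
    refine le_of_tendsto ((hcont.tendsto t0).mono_left (nhdsWithin_le_nhds (s := Iio t0))) ?_
    filter_upwards [self_mem_nhdsWithin] with t ht
    by_contra hcon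
    push_neg at hcon
    exact absurd (csInf_le hSbdd hcon.le) (not_le.mpr ht)
  have hFst0 : Fs t0 = c := le_antisymm hle ht0S
  have hiff : ∀ u, c ≤ Fs u ↔ t0 ≤ u := by
    intro u
    constructor
    · intro hcu; exact csInf_le hSbdd hcu
    · intro hu; rw [← hFst0]; exact hmono hu
  refine ⟨t0, hiff, ?_⟩
  -- measure computation
  have hU : {ω | q ω < t0} = ⋃ n : ℕ, {ω | q ω ≤ t0 - 1 / (n + 1)} := by
    ext ω
    simp only [mem_setOf_eq, mem_iUnion]
    constructor
    · intro hω
      obtain ⟨n, hn⟩ := exists_nat_one_div_lt (by linarith : (0:ℝ) < t0 - q ω)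
      exact ⟨n, by linarith⟩
    · rintro ⟨n, hn⟩
      have : (0:ℝ) < 1 / ((n:ℝ) + 1) := by positivity
      linarith
  have hmu : Monotone (fun n : ℕ => {ω | q ω ≤ t0 - 1 / ((n:ℕ) + 1)}) := by
    intro m n hmn ω hω
    simp only [mem_setOf_eq] at hω ⊢
    have h5 : 1 / ((n:ℝ) + 1) ≤ 1 / ((m:ℝ) + 1) := by
      apply one_div_le_one_div_of_le (by positivity)
      have : (m:ℝ) ≤ n := by exact_mod_cast hmn
      linarith
    linarith
  have h1 : Tendsto (fun n : ℕ => P {ω | q ω ≤ t0 - 1 / (n + 1)}) atTop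
      (𝓝 (P {ω | q ω < t0})) := by
    rw [hU]
    exact tendsto_measure_iUnion_atTop hmu
  have h2 : Tendsto (fun n : ℕ => P {ω | q ω ≤ t0 - 1 / (n + 1)}) atTop
      (𝓝 (ENNReal.ofReal c)) := by
    have ha1 : Tendsto (fun n : ℕ => t0 - 1 / ((n:ℝ) + 1)) atTop (𝓝 t0) := by
      have : Tendsto (fun n : ℕ => 1 / ((n:ℝ) + 1)) atTop (𝓝 0) := tendsto_one_div_add_atTop_nhds_zero_nat
      have h := tendsto_const_nhds (x := t0) (f := atTop (α := ℕ)) |>.sub this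
      simpa using h
    have ha2 : Tendsto (fun n : ℕ => Fs (t0 - 1 / ((n:ℝ) + 1))) atTop (𝓝 c) := by
      rw [← hFst0]
      exact (hcont.tendsto t0).comp ha1
    have ha3 : Tendsto (fun n : ℕ => ENNReal.ofReal (Fs (t0 - 1 / ((n:ℝ) + 1)))) atTop
        (𝓝 (ENNReal.ofReal c)) := (ENNReal.continuous_ofReal.tendsto c).comp ha2
    convert ha3 using 2 with n
    rw [hFs, ENNReal.ofReal_toReal (measure_ne_top _ _)]
  have hlt : P {ω | q ω < t0} = ENNReal.ofReal c := tendsto_nhds_unique h1 h2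
  have hcompl : {ω | t0 ≤ q ω} = {ω | q ω < t0}ᶜ := by
    ext ω; simp [not_lt]
  rw [hcompl, prob_compl_eq_one_sub (show MeasurableSet {ω | q ω < t0} from hq measurableSet_Iio), hlt,
    ENNReal.toReal_sub_of_le (ENNReal.ofReal_le_one.mpr hc1.le) ENNReal.one_ne_top]
  simp [ENNReal.toReal_ofReal hc0.le]

end Aux

open MeasureTheory

/-- Optimality of the plug-in rule `h*_ε` among all measurable classifiers
with reject option whose rejection probability equals `1 - ε`.  Classifiers with reject option
are maps `𝒳 → Option (Fin K)`, `none` playing the role of the reject symbol `ℜ`. -/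
theorem eero_optimal_reject_rule
    {Ω : Type*} [MeasurableSpace Ω] (P : Measure Ω) [IsProbabilityMeasure P]
    {d K : ℕ} (hK : 2 ≤ K)
    (X : Ω → (Fin d → ℝ)) (Y : Ω → Fin K) (hX : Measurable X) (hY : Measurable Y)
    -- conditional probabilities `p k x = ℙ(Y = k | X = x)`
    (p : Fin K → (Fin d → ℝ) → ℝ) (hpmeas : ∀ k, Measurable (p k))
    (hcond : ∀ (k : Fin K) (A : Set (Fin d → ℝ)), MeasurableSet A →
      (P {ω | X ω ∈ A ∧ Y ω = k}).toReal = ∫ ω in X ⁻¹' A, p k (X ω) ∂P)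
    -- the score function `s x = max_k p k x`
    (s : (Fin d → ℝ) → ℝ) (hs : ∀ x, s x = ⨆ k : Fin K, p k x)
    -- `Fs` is the CDF of `s(X)`, assumed continuous
    (Fs : ℝ → ℝ) (hFs : ∀ t, Fs t = (P {ω | s (X ω) ≤ t}).toReal)
    (hFscont : Continuous Fs)
    (ε : ℝ) (hε : ε ∈ Set.Ioo (0 : ℝ) 1)
    -- `g` is a Bayes classifier: `g x ∈ argmax_k p k x`
    (g : (Fin d → ℝ) → Fin K) (hg : Measurable g) (hgopt : ∀ x k, p k x ≤ p (g x) x)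
    -- the plug-in rule `h*_ε`
    (hstar : (Fin d → ℝ) → Option (Fin K))
    (hstardef : ∀ x, hstar x = if 1 - ε ≤ Fs (s x) then some (g x) else none)
    -- an arbitrary measurable competitor rejecting with probability exactly `1 - ε`
    (h : (Fin d → ℝ) → Option (Fin K))
    (hhmeas : ∀ o : Option (Fin K), MeasurableSet (h ⁻¹' {o}))
    (hrej : (P {ω | h (X ω) = none}).toReal = 1 - ε) :
    (P {ω | hstar (X ω) ≠ some (Y ω) ∧ hstar (X ω) ≠ none}).toReal ≤
      (P {ω | h (X ω) ≠ some (Y ω) ∧ h (X ω) ≠ none}).toReal := by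
  have hKpos : 0 < K := by omega
  haveI : Nonempty (Fin K) := Fin.pos_iff_nonempty.mp hKpos
  -- the score equals the probability of the Bayes class
  have hsg : ∀ x, s x = p (g x) x := by
    intro x
    rw [hs]
    refine le_antisymm (ciSup_le fun k => hgopt x k) ?_
    exact le_ciSup (f := fun k : Fin K => p k x) (Set.Finite.bddAbove (Set.finite_range _)) (g x)
  have hple : ∀ (k : Fin K) (x : Fin d → ℝ), p k x ≤ s x := by
    intro k x
    rw [hsg]; exact hgopt x k
  -- measurability of `s`
  have hsum : ∀ x, (∑ k : Fin K, if g x = k then p k x else 0) = p (g x) x := by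
    intro x
    rw [Finset.sum_eq_single_of_mem (g x) (Finset.mem_univ _)]
    · simp
    · intro b _ hb
      simp [Ne.symm hb]
  have smeas : Measurable s := by
    have : s = fun x => ∑ k : Fin K, if g x = k then p k x else 0 := by
      funext x
      rw [hsum x, ← hsg]
    rw [this]
    refine Finset.measurable_sum _ fun k _ => ?_
    have hgk : MeasurableSet {x | g x = k} := by
      simpa [Set.preimage, Set.mem_singleton_iff] using hg (measurableSet_singleton k)
    exact Measurable.ite hgk (hpmeas k) measurable_const
  set q : Ω → ℝ := fun ω => s (X ω) with hqdef
  have hqmeas : Measurable q := smeas.comp hX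
  -- integrability of the conditional probabilities
  have fint : ∀ k : Fin K, Integrable (fun ω => p k (X ω)) P := by
    intro k
    refine aux_integrable P _ ((hpmeas k).comp hX) (P.restrict {ω | Y ω = k})
      Measure.restrict_le_self ?_
    intro B hB
    have hpre : (fun ω => p k (X ω)) ⁻¹' B = X ⁻¹' (p k ⁻¹' B) := rfl
    have h1 := hcond k (p k ⁻¹' B) (hpmeas k hB)
    have h2 : {ω | X ω ∈ p k ⁻¹' B ∧ Y ω = k} = X ⁻¹' (p k ⁻¹' B) ∩ {ω | Y ω = k} := rfl
    rw [hpre, Measure.restrict_apply (hX (hpmeas k hB)), ← h2, ← h1]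
  -- integrability of the score
  have qint : Integrable q P := by
    refine Integrable.mono' (integrable_finset_sum Finset.univ
      (fun k _ => (fint k).abs)) hqmeas.aestronglyMeasurable ?_
    refine ae_of_all _ fun ω => ?_
    rw [Real.norm_eq_abs, hqdef]
    simp only
    rw [hsg]
    exact Finset.single_le_sum (f := fun k => |p k (X ω)|)
      (fun k _ => abs_nonneg _) (Finset.mem_univ (g (X ω)))
  -- the quantile
  obtain ⟨t0, hiff, hDval⟩ := aux_quantile P q hqmeas Fs
    (fun t => hFs t) hFscont (1 - ε) (by linarith [hε.2]) (by linarith [hε.1])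
  have hDval' : (P {ω | t0 ≤ q ω}).toReal = ε := by rw [hDval]; ring
  set D : Set Ω := {ω | t0 ≤ q ω} with hDdef
  have measD : MeasurableSet D := measurableSet_le measurable_const hqmeas
  -- the error event of `hstar`
  set G : Set Ω := {ω | Y ω = g (X ω)} with hGdef
  have measG : MeasurableSet G := by
    have : G = ⋃ k : Fin K, ({ω | Y ω = k} ∩ {ω | g (X ω) = k}) := by
      ext ω
      simp only [hGdef, mem_setOf_eq, mem_iUnion, mem_inter_iff]
      constructor
      · intro hω; exact ⟨g (X ω), hω, rfl⟩
      · rintro ⟨k, h1, h2⟩; rw [h1, h2]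
    rw [this]
    refine MeasurableSet.iUnion fun k => MeasurableSet.inter ?_ ?_
    · exact hY (measurableSet_singleton k)
    · exact (hg.comp hX) (measurableSet_singleton k)
  have hEstar : {ω | hstar (X ω) ≠ some (Y ω) ∧ hstar (X ω) ≠ none} = D \ G := by
    ext ω
    simp only [mem_setOf_eq, mem_diff, hDdef, hGdef]
    rw [hstardef (X ω)]
    by_cases hc : 1 - ε ≤ Fs (s (X ω))
    · have hd : t0 ≤ q ω := (hiff (q ω)).mp hc
      simp only [if_pos hc, ne_eq, Option.some.injEq, reduceCtorEq, not_false_eq_true,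
        and_true, mem_setOf_eq]
      constructor
      · intro h1; exact ⟨hd, fun hcon => h1 (by rw [hcon])⟩
      · rintro ⟨-, h2⟩ hcon; exact h2 hcon.symm
    · have hd : ¬ t0 ≤ q ω := fun hcon => hc ((hiff (q ω)).mpr hcon)
      simp only [if_neg hc, ne_eq, not_true_eq_false, and_false, false_iff, mem_setOf_eq]
      rintro ⟨h1, -⟩
      exact hd h1
  -- split `D` by the value of `g ∘ X`
  have hDsplit : D = ⋃ k ∈ Finset.univ, (D ∩ {ω | g (X ω) = k}) := by
    ext ω
    simp only [Finset.mem_univ, iUnion_true, mem_iUnion, mem_inter_iff, mem_setOf_eq]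
    constructor
    · intro hω; exact ⟨g (X ω), hω, rfl⟩
    · rintro ⟨k, h1, -⟩; exact h1
  have measDk : ∀ k : Fin K, MeasurableSet (D ∩ {ω | g (X ω) = k}) :=
    fun k => measD.inter ((hg.comp hX) (measurableSet_singleton k))
  have hDkdisj : ((Finset.univ : Finset (Fin K)) : Set (Fin K)).Pairwise
      (Function.onFun Disjoint (fun k => D ∩ {ω | g (X ω) = k})) := by
    rintro i - j - hij
    refine Set.disjoint_left.mpr ?_
    rintro ω ⟨-, h2⟩ ⟨-, h4⟩
    exact hij (h2.symm.trans h4)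
  -- ℙ(D ∩ G) = ∫_D q
  have hDG : (P (D ∩ G)).toReal = ∫ ω in D, q ω ∂P := by
    have hsplit : D ∩ G = ⋃ k ∈ Finset.univ, ((D ∩ {ω | g (X ω) = k}) ∩ {ω | Y ω = k}) := by
      ext ω
      simp only [Finset.mem_univ, iUnion_true, mem_iUnion, mem_inter_iff, mem_setOf_eq, hGdef]
      constructor
      · rintro ⟨h1, h2⟩; exact ⟨g (X ω), ⟨h1, rfl⟩, h2⟩
      · rintro ⟨k, ⟨h1, h2⟩, h3⟩; exact ⟨h1, h3.trans h2.symm⟩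
    have hdisj : ((Finset.univ : Finset (Fin K)) : Set (Fin K)).Pairwise
        (Function.onFun Disjoint (fun k => (D ∩ {ω | g (X ω) = k}) ∩ {ω | Y ω = k})) := by
      rintro i - j - hij
      refine Set.disjoint_left.mpr ?_
      rintro ω ⟨⟨-, h2⟩, -⟩ ⟨⟨-, h4⟩, -⟩
      exact hij (h2.symm.trans h4)
    rw [hsplit, measure_biUnion_finset hdisj
      (fun k _ => (measDk k).inter (hY (measurableSet_singleton k))),
      ENNReal.toReal_sum (fun k _ => measure_ne_top _ _)]
    -- each summand is an integral of q over the piece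
    have hterm : ∀ k : Fin K,
        (P ((D ∩ {ω | g (X ω) = k}) ∩ {ω | Y ω = k})).toReal =
          ∫ ω in D ∩ {ω | g (X ω) = k}, q ω ∂P := by
      intro k
      set A : Set (Fin d → ℝ) := (s ⁻¹' Ici t0) ∩ (g ⁻¹' {k}) with hAdef
      have hAmeas : MeasurableSet A := (smeas measurableSet_Ici).inter
        (hg (measurableSet_singleton k))
      have hpre : X ⁻¹' A = D ∩ {ω | g (X ω) = k} := rfl
      have h1 := hcond k A hAmeas
      have h2 : {ω | X ω ∈ A ∧ Y ω = k} = (D ∩ {ω | g (X ω) = k}) ∩ {ω | Y ω = k} := rfl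
      rw [h2, hpre] at h1
      rw [h1]
      refine setIntegral_congr_fun (measDk k) ?_
      rintro ω ⟨-, h4⟩
      simp only [mem_setOf_eq] at h4
      simp only [hqdef]
      rw [hsg (X ω), h4]
    rw [Finset.sum_congr rfl (fun k _ => hterm k)]
    rw [← integral_biUnion_finset Finset.univ (fun k _ => measDk k) hDkdisj
      (fun k _ => qint.integrableOn)]
    exact setIntegral_congr_set (by rw [← hDsplit]; exact EventuallyEq.rfl)
  -- risk of hstar = ε - ∫_D q
  have hriskstar : (P {ω | hstar (X ω) ≠ some (Y ω) ∧ hstar (X ω) ≠ none}).toReal =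
      ε - ∫ ω in D, q ω ∂P := by
    rw [hEstar]
    have hunion : P (D ∩ G) + P (D \ G) = P D := by
      rw [← measure_union
        ((disjoint_sdiff_right.mono_left inter_subset_right) : Disjoint (D ∩ G) (D \ G))
        (measD.diff measG)]
      congr 1
      rw [inter_union_diff]
    have := congrArg ENNReal.toReal hunion
    rw [ENNReal.toReal_add (measure_ne_top _ _) (measure_ne_top _ _)] at this
    rw [hDval'] at this
    rw [← hDG]
    linarith
  -- now the competitor
  set C : Fin K → Set Ω := fun k => X ⁻¹' (h ⁻¹' {some k}) with hCdef
  have measC : ∀ k, MeasurableSet (C k) := fun k => hX (hhmeas (some k))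
  have hCdisj : ((Finset.univ : Finset (Fin K)) : Set (Fin K)).Pairwise (Function.onFun Disjoint C) := by
    rintro i - j - hij
    refine Set.disjoint_left.mpr ?_
    rintro ω h1 h2
    simp only [hCdef, mem_preimage, mem_singleton_iff] at h1 h2
    rw [h1] at h2
    exact hij (Option.some_inj.mp h2)
  set Cu : Set Ω := ⋃ k ∈ Finset.univ, C k with hCudef
  have measCu : MeasurableSet Cu := by
    refine MeasurableSet.biUnion (Finset.countable_toSet _) fun k _ => measC k
  have hCuval : (P Cu).toReal = ε := by
    have hcompl : Cuᶜ = {ω | h (X ω) = none} := by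
      ext ω
      simp only [hCudef, mem_compl_iff, Finset.mem_univ, iUnion_true, mem_iUnion, hCdef,
        mem_preimage, mem_singleton_iff, not_exists, mem_setOf_eq]
      constructor
      · intro hω
        cases hco : h (X ω) with
        | none => rfl
        | some k => exact absurd hco (hω k)
      · intro hω k hco
        rw [hω] at hco
        simp at hco
    have h1 : (P Cuᶜ).toReal = 1 - (P Cu).toReal := by
      rw [prob_compl_eq_one_sub measCu,
        ENNReal.toReal_sub_of_le prob_le_one ENNReal.one_ne_top, ENNReal.toReal_one]
    rw [hcompl, hrej] at h1
    linarith
  -- error event of the competitor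
  have hE : {ω | h (X ω) ≠ some (Y ω) ∧ h (X ω) ≠ none} =
      ⋃ k ∈ Finset.univ, (C k ∩ {ω | Y ω = k}ᶜ) := by
    ext ω
    simp only [mem_setOf_eq, Finset.mem_univ, iUnion_true, mem_iUnion, mem_inter_iff,
      hCdef, mem_preimage, mem_singleton_iff, mem_compl_iff, ne_eq]
    cases hco : h (X ω) with
    | none => simp
    | some k =>
      simp only [Option.some.injEq, reduceCtorEq, not_false_eq_true, and_true]
      constructor
      · intro h1
        exact ⟨k, rfl, fun hc => h1 hc.symm⟩
      · rintro ⟨j, hj, hne⟩ hc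
        exact hne (hc.symm.trans hj)
  have measEk : ∀ k : Fin K, MeasurableSet (C k ∩ {ω | Y ω = k}ᶜ) :=
    fun k => (measC k).inter (hY (measurableSet_singleton k)).compl
  have hEdisj : ((Finset.univ : Finset (Fin K)) : Set (Fin K)).Pairwise
      (Function.onFun Disjoint (fun k => C k ∩ {ω | Y ω = k}ᶜ)) := by
    intro i hi j hj hij
    exact (hCdisj hi hj hij).mono inf_le_left inf_le_left
  have hPE : (P {ω | h (X ω) ≠ some (Y ω) ∧ h (X ω) ≠ none}).toReal =
      ∑ k : Fin K, (P (C k ∩ {ω | Y ω = k}ᶜ)).toReal := by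
    rw [hE, measure_biUnion_finset hEdisj (fun k _ => measEk k),
      ENNReal.toReal_sum (fun k _ => measure_ne_top _ _)]
  have hsplitk : ∀ k : Fin K, (P (C k ∩ {ω | Y ω = k}ᶜ)).toReal =
      (P (C k)).toReal - (P (C k ∩ {ω | Y ω = k})).toReal := by
    intro k
    have hu : P (C k ∩ {ω | Y ω = k}) + P (C k ∩ {ω | Y ω = k}ᶜ) = P (C k) := by
      rw [← measure_union
        (((disjoint_compl_right).mono inter_subset_right inter_subset_right) :
          Disjoint (C k ∩ {ω | Y ω = k}) (C k ∩ {ω | Y ω = k}ᶜ))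
        (measEk k), inter_union_compl]
    have := congrArg ENNReal.toReal hu
    rw [ENNReal.toReal_add (measure_ne_top _ _) (measure_ne_top _ _)] at this
    linarith
  have hcondk : ∀ k : Fin K, (P (C k ∩ {ω | Y ω = k})).toReal =
      ∫ ω in C k, p k (X ω) ∂P := by
    intro k
    have h1 := hcond k (h ⁻¹' {some k}) (hhmeas (some k))
    have h2 : {ω | X ω ∈ h ⁻¹' {some k} ∧ Y ω = k} = C k ∩ {ω | Y ω = k} := rfl
    rw [h2] at h1
    exact h1
  have hmonok : ∀ k : Fin K, ∫ ω in C k, p k (X ω) ∂P ≤ ∫ ω in C k, q ω ∂P :=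
    fun k => setIntegral_mono_on ((fint k).integrableOn) (qint.integrableOn)
      (measC k) (fun ω _ => hple k (X ω))
  have hsumC : ∑ k : Fin K, (P (C k)).toReal = ε := by
    rw [← ENNReal.toReal_sum (fun k _ => measure_ne_top _ _),
      ← measure_biUnion_finset hCdisj (fun k _ => measC k)]
    exact hCuval
  have hsumI : ∑ k : Fin K, ∫ ω in C k, q ω ∂P = ∫ ω in Cu, q ω ∂P :=
    (integral_biUnion_finset Finset.univ (fun k _ => measC k) hCdisj
      (fun k _ => qint.integrableOn)).symm
  have hriskh : ε - ∫ ω in Cu, q ω ∂P ≤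
      (P {ω | h (X ω) ≠ some (Y ω) ∧ h (X ω) ≠ none}).toReal := by
    rw [hPE]
    have h1 : ∑ k : Fin K, (P (C k ∩ {ω | Y ω = k}ᶜ)).toReal =
        ∑ k : Fin K, ((P (C k)).toReal - (P (C k ∩ {ω | Y ω = k})).toReal) :=
      Finset.sum_congr rfl (fun k _ => hsplitk k)
    rw [h1, Finset.sum_sub_distrib, hsumC]
    have h2 : ∑ k : Fin K, (P (C k ∩ {ω | Y ω = k})).toReal ≤ ∫ ω in Cu, q ω ∂P := by
      rw [← hsumI]
      exact Finset.sum_le_sum (fun k _ => (hcondk k).le.trans (hmonok k))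
    linarith
  -- final comparison ∫_Cu q ≤ ∫_D q
  have hkey : ∫ ω in Cu, q ω ∂P ≤ ∫ ω in D, q ω ∂P := by
    have h1 : ∫ ω in Cu ∩ D, q ω ∂P + ∫ ω in Cu \ D, q ω ∂P = ∫ ω in Cu, q ω ∂P :=
      integral_inter_add_diff measD qint.integrableOn
    have h2 : ∫ ω in D ∩ Cu, q ω ∂P + ∫ ω in D \ Cu, q ω ∂P = ∫ ω in D, q ω ∂P :=
      integral_inter_add_diff measCu qint.integrableOn
    rw [show D ∩ Cu = Cu ∩ D from inter_comm _ _] at h2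
    have hm1 : (P (Cu ∩ D)).toReal + (P (Cu \ D)).toReal = ε := by
      rw [← ENNReal.toReal_add (measure_ne_top _ _) (measure_ne_top _ _),
        ← measure_union
          ((disjoint_sdiff_right.mono_left inter_subset_right) : Disjoint (Cu ∩ D) (Cu \ D))
          (measCu.diff measD), inter_union_diff]
      exact hCuval
    have hm2 : (P (Cu ∩ D)).toReal + (P (D \ Cu)).toReal = ε := by
      rw [show Cu ∩ D = D ∩ Cu from inter_comm _ _,
        ← ENNReal.toReal_add (measure_ne_top _ _) (measure_ne_top _ _),
        ← measure_union
          ((disjoint_sdiff_right.mono_left inter_subset_right) : Disjoint (D ∩ Cu) (D \ Cu))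
          (measD.diff measCu), inter_union_diff]
      exact hDval'
    have hub : ∫ ω in Cu \ D, q ω ∂P ≤ (P (Cu \ D)).toReal * t0 := by
      have := setIntegral_mono_on (qint.integrableOn) (integrable_const t0)
        (measCu.diff measD) (fun ω hω => le_of_not_ge hω.2)
      rwa [setIntegral_const, smul_eq_mul] at this
    have hlb : (P (D \ Cu)).toReal * t0 ≤ ∫ ω in D \ Cu, q ω ∂P := by
      have := setIntegral_mono_on (integrable_const t0) (qint.integrableOn)
        (measD.diff measCu) (fun ω hω => hω.1)
      rwa [setIntegral_const, smul_eq_mul] at this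
    have hr : (P (Cu \ D)).toReal = (P (D \ Cu)).toReal := by linarith
    rw [hr] at hub
    linarith
  rw [hriskstar]
  linarith
end

section
/- Let ŝ : 𝒳 → ℝ be a measurable score function such that the cumulative distribution function F of ŝ(X) is continuous. Let X₁,…,X_N be i.i.d. copies of X, independent of X, and let F̂(t) = (1/N) Σ_{i=1}^N 1{ŝ(X_i) ≤ t} be the empirical CDF of the scores. For ε ∈ (0,1) define the empirical reject rule ĥ_ε(x) = ℜ if F̂(ŝ(x)) < 1−ε and ĥ_ε(x) = ĝ(x) otherwise. Then |P(ĥ_ε(X) = ℜ) − (1−ε)| ≤ C/√N with the explicit constant C = 2√(π/2), where the probability is taken over both X and the sample X₁,…,X_N; this bound holds whatever the distribution of X and whatever the measurable score ŝ. -/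
open MeasureTheory ProbabilityTheory

open intervalIntegral Set Filter Topology

lemma fact_prod_n (a : ℕ) : ∀ b : ℕ, a.factorial * ∏ j ∈ Finset.range (b+1), (a+1+j) = (a+b+1).factorial
  | 0 => by simp [Nat.factorial_succ]; ring
  | (b+1) => by
    rw [Finset.prod_range_succ, ← mul_assoc, fact_prod_n a b]
    have h1 : a + (b+1) + 1 = (a + b + 1) + 1 := by ring
    rw [h1, Nat.factorial_succ (a+b+1)]; ring

lemma fact_prod_c (a b : ℕ) : (a.factorial : ℂ) * ∏ j ∈ Finset.range (b+1), ((a:ℂ)+1+j) = ((a+b+1).factorial : ℂ) := by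
  have := congrArg (fun n : ℕ => (n : ℂ)) (fact_prod_n a b)
  push_cast at this
  simpa using this

lemma beta_nat (a b : ℕ) :
    ∫ x in (0:ℝ)..1, x^a * (1-x)^b = (a.factorial * b.factorial : ℝ) / ((a+b+1).factorial) := by
  have h := Complex.betaIntegral_eval_nat_add_one_right (u := (a:ℂ)+1) (by simp [Complex.add_re]; positivity) b
  rw [Complex.betaIntegral] at h
  have hint : ∀ x : ℝ, (x:ℂ) ^ ((a:ℂ)+1-1) * (1-(x:ℂ)) ^ ((b:ℂ)+1-1) = ((x^a * (1-x)^b : ℝ) : ℂ) := by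
    intro x
    rw [add_sub_cancel_right, add_sub_cancel_right, Complex.cpow_natCast, Complex.cpow_natCast]
    push_cast; ring
  simp_rw [hint] at h
  rw [intervalIntegral.integral_ofReal] at h
  have hprod := fact_prod_c a b
  have hne : (∏ j ∈ Finset.range (b+1), ((a:ℂ)+1+j)) ≠ 0 := by
    apply Finset.prod_ne_zero_iff.2
    intro j hj hc
    have := congrArg Complex.re hc
    simp only [Complex.add_re, Complex.natCast_re, Complex.one_re, Complex.zero_re] at this
    have : (0:ℝ) < a + 1 + j := by positivity
    linarith
  have hfne : ((a+b+1).factorial : ℂ) ≠ 0 := Nat.cast_ne_zero.2 (Nat.factorial_ne_zero _)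
  have h2 : ((∫ x in (0:ℝ)..1, x^a * (1-x)^b : ℝ) : ℂ) = ((a.factorial * b.factorial / ((a+b+1).factorial) : ℝ) : ℂ) := by
    rw [h]
    push_cast
    rw [div_eq_div_iff hne hfne, ← hprod]
    ring
  exact_mod_cast h2

lemma pit_le (ν : Measure ℝ) [IsProbabilityMeasure ν] (F : ℝ → ℝ)
    (hF : ∀ t, F t = (ν (Iic t)).toReal) (hFc : Continuous F)
    {u : ℝ} (hu0 : 0 ≤ u) (hu1 : u < 1) :
    ν {s | F s ≤ u} = ENNReal.ofReal u := by
  have hmono : Monotone F := by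
    intro a b hab
    rw [hF a, hF b]
    exact ENNReal.toReal_mono (measure_ne_top _ _) (measure_mono (Iic_subset_Iic.2 hab))
  have hFcdf : F = ProbabilityTheory.cdf ν := by
    funext t; rw [hF t, ProbabilityTheory.cdf_eq_real, measureReal_def]
  have htop : Tendsto F atTop (𝓝 1) := by rw [hFcdf]; exact ProbabilityTheory.tendsto_cdf_atTop ν
  have hbot : Tendsto F atBot (𝓝 0) := by rw [hFcdf]; exact ProbabilityTheory.tendsto_cdf_atBot ν
  have hofReal : ∀ t, ν (Iic t) = ENNReal.ofReal (F t) := by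
    intro t; rw [hF t, ENNReal.ofReal_toReal (measure_ne_top _ _)]
  set A := {s | F s ≤ u} with hA
  by_cases hne : A.Nonempty
  · -- A is nonempty, closed, bounded above
    have hclosed : IsClosed A := isClosed_le hFc continuous_const
    have hbdd : BddAbove A := by
      obtain ⟨s₀, hs₀⟩ : ∃ s₀, u < F s₀ := by
        have := htop.eventually (eventually_gt_nhds hu1)
        exact this.exists
      refine ⟨s₀, fun a ha => ?_⟩
      by_contra hcon
      push_neg at hcon
      exact absurd (hmono hcon.le) (not_le.2 (lt_of_le_of_lt ha hs₀))
    set t := sSup A with ht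
    have htA : t ∈ A := hclosed.csSup_mem hne hbdd
    have hAeq : A = Iic t := by
      apply Subset.antisymm
      · exact fun a ha => le_csSup hbdd ha
      · exact fun a ha => le_trans (hmono ha) htA
    have hFt : F t = u := by
      refine le_antisymm htA ?_
      by_contra hlt
      push_neg at hlt
      have : ∀ᶠ s in 𝓝 t, F s < u := hFc.continuousAt.eventually_lt continuousAt_const hlt
      have : ∀ᶠ s in 𝓝[>] t, F s < u := eventually_nhdsWithin_of_eventually_nhds this
      obtain ⟨s, hs1, hs2⟩ := (this.and self_mem_nhdsWithin).exists
      exact absurd (le_csSup hbdd (hs1.le : F s ≤ u)) (not_le.2 hs2)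
    rw [hAeq, hofReal, hFt]
  · rw [not_nonempty_iff_eq_empty] at hne
    rw [hne, measure_empty]
    have hu0' : u ≤ 0 := by
      by_contra hpos
      push_neg at hpos
      have := (hbot.eventually (eventually_lt_nhds hpos)).exists
      obtain ⟨s, hs⟩ := this
      have hsA : s ∈ A := hs.le
      rw [hne] at hsA
      exact notMem_empty s hsA
    rw [ENNReal.ofReal_eq_zero.2 (le_antisymm hu0' hu0).le]

lemma map_F_uniform (ν : Measure ℝ) [IsProbabilityMeasure ν] (F : ℝ → ℝ)
    (hF : ∀ t, F t = (ν (Iic t)).toReal) (hFc : Continuous F) :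
    ν.map F = volume.restrict (Icc (0:ℝ) 1) := by
  have hF0 : ∀ t, 0 ≤ F t := fun t => by rw [hF t]; exact ENNReal.toReal_nonneg
  have hF1 : ∀ t, F t ≤ 1 := fun t => by
    rw [hF t]
    exact ENNReal.toReal_le_of_le_ofReal zero_le_one (by simpa using prob_le_one)
  have : IsFiniteMeasure (ν.map F) := by
    constructor
    rw [Measure.map_apply hFc.measurable MeasurableSet.univ]
    simp
  refine Measure.ext_of_Iic _ _ fun u => ?_
  rw [Measure.map_apply hFc.measurable measurableSet_Iic]
  have hpre : F ⁻¹' Iic u = {s | F s ≤ u} := rfl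
  rw [hpre]
  rcases lt_or_ge u 0 with hu | hu
  · have h1 : {s | F s ≤ u} = ∅ := by
      ext s; simp only [mem_setOf_eq, mem_empty_iff_false, iff_false, not_le]
      exact lt_of_lt_of_le hu (hF0 s)
    rw [h1, measure_empty, Measure.restrict_apply measurableSet_Iic]
    have : Iic u ∩ Icc (0:ℝ) 1 = ∅ := by
      ext x; simp only [mem_inter_iff, mem_Iic, mem_Icc, mem_empty_iff_false, iff_false]
      rintro ⟨h1, h2, h3⟩; linarith
    rw [this, measure_empty]
  rcases lt_or_ge u 1 with hu1 | hu1
  · rw [pit_le ν F hF hFc hu hu1, Measure.restrict_apply measurableSet_Iic]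
    have : Iic u ∩ Icc (0:ℝ) 1 = Icc 0 u := by
      ext x; simp only [mem_inter_iff, mem_Iic, mem_Icc]
      constructor
      · rintro ⟨h1, h2, h3⟩; exact ⟨h2, h1⟩
      · rintro ⟨h1, h2⟩; exact ⟨h2, h1, le_trans h2 hu1.le⟩
    rw [this, Real.volume_Icc]
    norm_num
  · have h1 : {s | F s ≤ u} = univ := by
      ext s; simp only [mem_setOf_eq, mem_univ, iff_true]
      exact le_trans (hF1 s) hu1
    rw [h1, Measure.restrict_apply measurableSet_Iic]
    have : Iic u ∩ Icc (0:ℝ) 1 = Icc 0 1 := by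
      ext x; simp only [mem_inter_iff, mem_Iic, mem_Icc]
      constructor
      · rintro ⟨h1, h2, h3⟩; exact ⟨h2, h3⟩
      · rintro ⟨h2, h3⟩; exact ⟨le_trans h3 hu1, h2, h3⟩
    rw [this, Real.volume_Icc, measure_univ]
    norm_num


/-- Distribution-free control of the rejection rate of the empirical
reject rule built from the empirical CDF of the scores of an i.i.d. sample:
`|ℙ(ĥ_ε(X) = ℜ) − (1−ε)| ≤ C/√N` with `C = 2√(π/2)`.  `none` is the reject symbol `ℜ`. -/
theorem eero_empirical_rejection_rate
    {Ω : Type*} [MeasurableSpace Ω] (P : Measure Ω) [IsProbabilityMeasure P]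
    {d K : ℕ}
    (X : Ω → (Fin d → ℝ)) (hX : Measurable X)
    -- a measurable score function whose CDF `F` is continuous
    (shat : (Fin d → ℝ) → ℝ) (hshat : Measurable shat)
    (F : ℝ → ℝ) (hF : ∀ t, F t = (P {ω | shat (X ω) ≤ t}).toReal) (hFcont : Continuous F)
    -- the i.i.d. sample `X₁, …, X_N`, independent of `X`
    (N : ℕ) (hN : 0 < N) (Xs : Fin N → Ω → (Fin d → ℝ)) (hXs : ∀ i, Measurable (Xs i))
    (hident : ∀ i, Measure.map (Xs i) P = Measure.map X P)
    (hiid : iIndepFun Xs P)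
    (hindep : IndepFun X (fun ω i => Xs i ω) P)
    -- the empirical CDF of the scores
    (Fhat : Ω → ℝ → ℝ)
    (hFhat : ∀ ω t, Fhat ω t = (1 / (N : ℝ)) * ∑ i : Fin N, if shat (Xs i ω) ≤ t then 1 else 0)
    -- an arbitrary classifier `ĝ` and the empirical reject rule `ĥ_ε`
    (ghat : (Fin d → ℝ) → Fin K)
    (ε : ℝ) (hε : ε ∈ Set.Ioo (0 : ℝ) 1)
    (hhat : Ω → (Fin d → ℝ) → Option (Fin K))
    (hhatdef : ∀ ω x, hhat ω x = if Fhat ω (shat x) < 1 - ε then none else some (ghat x))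
    (C : ℝ) (hC : C = 2 * Real.sqrt (Real.pi / 2)) :
    |(P {ω | hhat ω (X ω) = none}).toReal - (1 - ε)| ≤ C / Real.sqrt N := by
  obtain ⟨hε0, hε1⟩ := hε
  set M : ℕ := ⌈(N : ℝ) * (1 - ε)⌉₊ with hM
  set S : Ω → ℝ := fun ω => shat (X ω) with hSdef
  have hS : Measurable S := hshat.comp hX
  set Y : Ω → (Fin N → ℝ) := fun ω i => shat (Xs i ω) with hYdef
  have hY : Measurable Y := measurable_pi_lambda _ fun i => hshat.comp (hXs i)
  -- the event set in the product space
  set cnt : ℝ × (Fin N → ℝ) → ℕ :=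
    fun q => (Finset.univ.filter (fun i => q.2 i ≤ q.1)).card with hcnt
  set E : Set (ℝ × (Fin N → ℝ)) := {q | cnt q < M} with hE
  have hcntmeas : Measurable cnt := by
    have : cnt = fun q => ∑ i : Fin N, if q.2 i ≤ q.1 then 1 else 0 := by
      funext q; rw [hcnt]; exact Finset.card_filter _ _
    rw [this]
    exact Finset.measurable_sum _ fun i _ => Measurable.ite
      (measurableSet_le (measurable_snd.eval) measurable_fst)
      measurable_const measurable_const
  have hEmeas : MeasurableSet E := hcntmeas (measurableSet_Iio (a := M))
  -- the rejection event equals the preimage of E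
  have hset : {ω | hhat ω (X ω) = none} = (fun ω => (S ω, Y ω)) ⁻¹' E := by
    ext ω
    have hiff : (hhat ω (X ω) = none) ↔ Fhat ω (shat (X ω)) < 1 - ε := by
      rw [hhatdef]
      split_ifs with hc
      · simp [hc]
      · simp [hc]
    have hNpos : (0:ℝ) < N := by exact_mod_cast hN
    have hsum : (∑ i : Fin N, if shat (Xs i ω) ≤ shat (X ω) then (1:ℝ) else 0)
        = ((cnt (S ω, Y ω) : ℕ) : ℝ) := by
      rw [hcnt, Finset.sum_boole]
    have hiff2 : Fhat ω (shat (X ω)) < 1 - ε ↔ cnt (S ω, Y ω) < M := by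
      rw [hFhat, hsum, one_div, inv_mul_lt_iff₀ hNpos, hM]
      exact ⟨fun h => Nat.lt_ceil.2 h, fun h => Nat.lt_ceil.1 h⟩
    simp only [mem_setOf_eq, mem_preimage, hE]
    rw [hiff, hiff2]
  -- independence of S and Y
  have hSY : IndepFun S Y P := by
    have hψ : Measurable (fun (v : Fin N → (Fin d → ℝ)) (i : Fin N) => shat (v i)) :=
      measurable_pi_lambda _ fun i => hshat.comp (measurable_pi_apply i)
    exact hindep.comp hshat hψ
  have hprodmap : P.map (fun ω => (S ω, Y ω)) = (P.map S).prod (P.map Y) :=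
    (indepFun_iff_map_prod_eq_prod_map_map hS.aemeasurable hY.aemeasurable).1 hSY
  have hνprob : IsProbabilityMeasure (P.map S) := Measure.isProbabilityMeasure_map hS.aemeasurable
  have hYprob : IsProbabilityMeasure (P.map Y) := Measure.isProbabilityMeasure_map hY.aemeasurable
  -- key facts about F
  have hFIic : ∀ t, F t = ((P.map S) (Iic t)).toReal := by
    intro t
    rw [Measure.map_apply hS measurableSet_Iic, hF t]
    rfl
  have hF0 : ∀ t, 0 ≤ F t := fun t => by rw [hF t]; exact ENNReal.toReal_nonneg
  have hF1 : ∀ t, F t ≤ 1 := fun t => by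
    rw [hFIic t]
    exact ENNReal.toReal_le_of_le_ofReal zero_le_one (by simpa using prob_le_one)
  -- single-sample probability
  have hone : ∀ (i : Fin N) (s : ℝ), P (Xs i ⁻¹' {x | shat x ≤ s}) = ENNReal.ofReal (F s) := by
    intro i s
    have hms : MeasurableSet {x : Fin d → ℝ | shat x ≤ s} := hshat measurableSet_Iic
    rw [← Measure.map_apply (hXs i) hms, hident i, Measure.map_apply hX hms]
    have : X ⁻¹' {x | shat x ≤ s} = {ω | shat (X ω) ≤ s} := rfl
    rw [this, hF s]
    exact (ENNReal.ofReal_toReal (measure_ne_top _ _)).symm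
  -- the inner probability for fixed s
  have hinner : ∀ s : ℝ, (P.map Y) (Prod.mk s ⁻¹' E) =
      ∑ T ∈ Finset.univ.filter (fun T : Finset (Fin N) => T.card < M),
        ENNReal.ofReal (F s) ^ T.card * ENNReal.ofReal (1 - F s) ^ (N - T.card) := by
    intro s
    have hsec : MeasurableSet (Prod.mk s ⁻¹' E) := measurable_prodMk_left hEmeas
    rw [Measure.map_apply hY hsec]
    set D : Finset (Fin N) → Set Ω := fun T =>
      ⋂ i, Xs i ⁻¹' (if i ∈ T then {x | shat x ≤ s} else {x | shat x ≤ s}ᶜ) with hDdef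
    have hD : ∀ (T : Finset (Fin N)) (ω : Ω), ω ∈ D T ↔ ∀ i, (shat (Xs i ω) ≤ s ↔ i ∈ T) := by
      intro T ω
      rw [hDdef]
      simp only [mem_iInter, mem_preimage]
      refine forall_congr' fun i => ?_
      by_cases hi : i ∈ T
      · simp [hi]
      · simp [hi]
    have hmeasC : ∀ (T : Finset (Fin N)) (i : Fin N),
        MeasurableSet (if i ∈ T then {x : Fin d → ℝ | shat x ≤ s} else {x | shat x ≤ s}ᶜ) := by
      intro T i
      by_cases hi : i ∈ T
      · rw [if_pos hi]; exact hshat measurableSet_Iic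
      · rw [if_neg hi]; exact (hshat measurableSet_Iic).compl
    have hmeasD : ∀ T, MeasurableSet (D T) := fun T =>
      MeasurableSet.iInter fun i => (hXs i) (hmeasC T i)
    have hunion : Y ⁻¹' (Prod.mk s ⁻¹' E) =
        ⋃ T ∈ Finset.univ.filter (fun T : Finset (Fin N) => T.card < M), D T := by
      ext ω
      simp only [mem_preimage, hE, mem_setOf_eq, mem_iUnion, Finset.mem_filter,
        Finset.mem_univ, true_and, exists_prop]
      constructor
      · intro h
        refine ⟨Finset.univ.filter (fun i => shat (Xs i ω) ≤ s), ?_, ?_⟩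
        · exact h
        · rw [hD]
          intro i
          simp [Finset.mem_filter]
      · rintro ⟨T, hT, hωT⟩
        have hiffi := (hD T ω).1 hωT
        have hTeq : Finset.univ.filter (fun i => shat (Xs i ω) ≤ s) = T := by
          ext i; simp [Finset.mem_filter, hiffi i]
        have : cnt (s, Y ω) = T.card := by rw [hcnt, ← hTeq]
        rw [this]
        exact hT
    rw [hunion, measure_biUnion_finset ?hdisj (fun T _ => hmeasD T)]
    case hdisj =>
      intro T hT T' hT' hne
      rw [Function.onFun, Set.disjoint_left]
      intro ω h1 h2
      apply hne
      ext i
      rw [← (hD T ω).1 h1 i, (hD T' ω).1 h2 i]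
    refine Finset.sum_congr rfl fun T hT => ?_
    have hprodP := hiid.meas_iInter
      (s := fun i => Xs i ⁻¹' (if i ∈ T then {x : Fin d → ℝ | shat x ≤ s} else {x | shat x ≤ s}ᶜ))
      (fun i => ⟨_, hmeasC T i, rfl⟩)
    rw [hDdef]
    rw [hprodP]
    have hterm : ∀ i : Fin N,
        P (Xs i ⁻¹' (if i ∈ T then {x : Fin d → ℝ | shat x ≤ s} else {x | shat x ≤ s}ᶜ))
        = if i ∈ T then ENNReal.ofReal (F s) else ENNReal.ofReal (1 - F s) := by
      intro i
      by_cases hi : i ∈ T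
      · rw [if_pos hi, if_pos hi]
        exact hone i s
      · have hms : MeasurableSet (Xs i ⁻¹' {x : Fin d → ℝ | shat x ≤ s}) :=
          hXs i (hshat measurableSet_Iic)
        rw [if_neg hi, if_neg hi, Set.preimage_compl,
          measure_compl hms (measure_ne_top _ _)]
        have : P (Xs i ⁻¹' {x | shat x ≤ s}) = ENNReal.ofReal (F s) := hone i s
        rw [this, measure_univ, ENNReal.ofReal_sub 1 (hF0 s), ENNReal.ofReal_one]
    simp_rw [hterm]
    rw [← Finset.prod_mul_prod_compl T]
    rw [Finset.prod_congr rfl (fun i hi => if_pos hi),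
      Finset.prod_congr rfl (fun i (hi : i ∈ Tᶜ) => if_neg (Finset.mem_compl.1 hi)),
      Finset.prod_const, Finset.prod_const, Finset.card_compl, Fintype.card_fin]
  -- the beta integral evaluation
  have hbeta : ∀ a b : ℕ, ∫⁻ s, ENNReal.ofReal (F s) ^ a * ENNReal.ofReal (1 - F s) ^ b ∂(P.map S)
      = ENNReal.ofReal ((a.factorial * b.factorial : ℝ) / ((a+b+1).factorial)) := by
    intro a b
    have h1 : ∀ s : ℝ, ENNReal.ofReal (F s) ^ a * ENNReal.ofReal (1 - F s) ^ b
        = ENNReal.ofReal ((F s)^a * (1 - F s)^b) := by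
      intro s
      rw [← ENNReal.ofReal_pow (hF0 s), ← ENNReal.ofReal_pow (by linarith [hF1 s]),
        ← ENNReal.ofReal_mul (pow_nonneg (hF0 s) a)]
    simp_rw [h1]
    have hGc : Continuous fun u : ℝ => u^a * (1-u)^b :=
      (continuous_pow a).mul ((continuous_const.sub continuous_id).pow b)
    have hGm : Measurable fun u : ℝ => ENNReal.ofReal (u^a * (1-u)^b) :=
      ENNReal.measurable_ofReal.comp hGc.measurable
    rw [← lintegral_map hGm hFcont.measurable, map_F_uniform (P.map S) F hFIic hFcont]
    have hint : IntegrableOn (fun u : ℝ => u^a * (1-u)^b) (Icc 0 1) volume :=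
      hGc.integrableOn_Icc
    have hnn : 0 ≤ᵐ[volume.restrict (Icc (0:ℝ) 1)] fun u : ℝ => u^a * (1-u)^b := by
      refine ae_restrict_of_forall_mem measurableSet_Icc fun x hx => ?_
      exact mul_nonneg (pow_nonneg hx.1 _) (pow_nonneg (by linarith [hx.2]) _)
    rw [← ofReal_integral_eq_lintegral_ofReal hint hnn]
    congr 1
    rw [MeasureTheory.integral_Icc_eq_integral_Ioc,
      ← intervalIntegral.integral_of_le (zero_le_one (α := ℝ))]
    exact beta_nat a b
  -- putting things together
  have hmain : P {ω | hhat ω (X ω) = none} = ENNReal.ofReal ((M : ℝ) / (N + 1)) := by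
    rw [hset, ← Measure.map_apply (hS.prodMk hY) hEmeas, hprodmap,
      Measure.prod_apply hEmeas]
    calc ∫⁻ s, (P.map Y) (Prod.mk s ⁻¹' E) ∂(P.map S)
        = ∫⁻ s, ∑ T ∈ Finset.univ.filter (fun T : Finset (Fin N) => T.card < M),
            ENNReal.ofReal (F s) ^ T.card * ENNReal.ofReal (1 - F s) ^ (N - T.card) ∂(P.map S) := by
          exact lintegral_congr fun s => hinner s
      _ = ∑ T ∈ Finset.univ.filter (fun T : Finset (Fin N) => T.card < M),
            ∫⁻ s, ENNReal.ofReal (F s) ^ T.card * ENNReal.ofReal (1 - F s) ^ (N - T.card) ∂(P.map S) := by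
          refine lintegral_finset_sum _ fun T _ => ?_
          exact ((ENNReal.measurable_ofReal.comp hFcont.measurable).pow_const _).mul
            ((ENNReal.measurable_ofReal.comp ((continuous_const.sub hFcont).measurable)).pow_const _)
      _ = ∑ T ∈ Finset.univ.filter (fun T : Finset (Fin N) => T.card < M),
            ENNReal.ofReal ((T.card.factorial * (N - T.card).factorial : ℝ) / ((N+1).factorial)) := by
          refine Finset.sum_congr rfl fun T hT => ?_
          have hTN : T.card ≤ N := by
            simpa using Finset.card_le_card (Finset.subset_univ T)
          have h1 : T.card + (N - T.card) + 1 = N + 1 := by omega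
          rw [hbeta T.card (N - T.card), h1]
      _ = ∑ j ∈ Finset.range M, ∑ T ∈ (Finset.univ.filter (fun T : Finset (Fin N) => T.card < M)).filter
            (fun T => T.card = j),
            ENNReal.ofReal ((T.card.factorial * (N - T.card).factorial : ℝ) / ((N+1).factorial)) := by
          refine (Finset.sum_fiberwise_of_maps_to ?_ _).symm
          intro T hT
          rw [Finset.mem_filter] at hT
          exact Finset.mem_range.2 hT.2
      _ = ∑ j ∈ Finset.range M, ENNReal.ofReal (1 / (N + 1 : ℝ)) := by
          refine Finset.sum_congr rfl fun j hj => ?_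
          have hjM : j < M := Finset.mem_range.1 hj
          have hMN : M ≤ N := by
            rw [hM]
            apply Nat.ceil_le.2
            nlinarith [(Nat.cast_pos.2 hN : (0:ℝ) < (N:ℝ))]
          have hjN : j ≤ N := le_trans (Nat.le_of_lt_succ (Nat.lt_succ_of_lt hjM)) hMN
          have hfib : (Finset.univ.filter (fun T : Finset (Fin N) => T.card < M)).filter
              (fun T => T.card = j) = Finset.powersetCard j Finset.univ := by
            ext T
            simp only [Finset.mem_filter, Finset.mem_univ, true_and,
              Finset.mem_powersetCard_univ]
            constructor
            · rintro ⟨h1, h2⟩; exact h2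
            · intro h; exact ⟨h ▸ hjM, h⟩
          rw [Finset.sum_congr hfib (fun T hT => by
            rw [Finset.mem_powersetCard_univ.1 hT]), Finset.sum_const,
            Finset.card_powersetCard, Finset.card_univ, Fintype.card_fin,
            nsmul_eq_mul, ← ENNReal.ofReal_natCast, ← ENNReal.ofReal_mul (by positivity)]
          congr 1
          have hcf : (N.choose j) * (j.factorial * (N - j).factorial) = N.factorial := by
            rw [← mul_assoc]
            exact Nat.choose_mul_factorial_mul_factorial hjN
          have hNf : ((N+1).factorial : ℝ) = (N+1) * N.factorial := by
            rw [Nat.factorial_succ]; push_cast; ring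
          have hcfR : ((N.choose j : ℝ)) * ((j.factorial : ℝ) * ((N - j).factorial : ℝ)) = (N.factorial : ℝ) := by
            exact_mod_cast hcf
          rw [hNf]
          field_simp
          nlinarith [hcfR, (Nat.cast_pos.2 N.factorial_pos : (0:ℝ) < (N.factorial:ℝ))]
      _ = ENNReal.ofReal ((M : ℝ) / (N + 1)) := by
          rw [Finset.sum_const, Finset.card_range, nsmul_eq_mul, ← ENNReal.ofReal_natCast,
            ← ENNReal.ofReal_mul (by positivity)]
          congr 1
          ring
  rw [hmain]
  have hden : (0:ℝ) < (N:ℝ)+1 := by positivity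
  have hnn : 0 ≤ (M:ℝ)/((N:ℝ)+1) := by positivity
  rw [ENNReal.toReal_ofReal hnn]
  have hN1 : (1:ℝ) ≤ (N:ℝ) := by exact_mod_cast hN
  have hM1 : (N:ℝ)*(1-ε) ≤ (M:ℝ) := Nat.le_ceil _
  have hM2 : (M:ℝ) < (N:ℝ)*(1-ε) + 1 := by
    rw [hM]; exact Nat.ceil_lt_add_one (by nlinarith)
  have key : |(M:ℝ) - ((N:ℝ)+1)*(1-ε)| ≤ 1 := by
    rw [abs_le]; constructor <;> nlinarith
  have habs : |(M:ℝ)/((N:ℝ)+1) - (1-ε)| ≤ 1/((N:ℝ)+1) := by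
    have heq : (M:ℝ)/((N:ℝ)+1) - (1-ε) = ((M:ℝ) - ((N:ℝ)+1)*(1-ε))/((N:ℝ)+1) := by
      field_simp
    rw [heq, abs_div, abs_of_pos hden]
    gcongr
  have hNpos : (0:ℝ) < (N:ℝ) := by linarith
  have hsq : (0:ℝ) < Real.sqrt N := Real.sqrt_pos.2 hNpos
  have h2 : 1/((N:ℝ)+1) ≤ 1/Real.sqrt N := by
    apply one_div_le_one_div_of_le hsq
    have h4 : Real.sqrt N ≤ Real.sqrt ((N:ℝ)^2) := Real.sqrt_le_sqrt (by nlinarith)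
    rw [Real.sqrt_sq (by linarith)] at h4
    linarith
  have hC1 : 1 ≤ C := by
    rw [hC]
    have hπ : (3:ℝ) < Real.pi := Real.pi_gt_three
    have h1 : (1:ℝ) ≤ Real.pi/2 := by linarith
    have h2' : Real.sqrt 1 ≤ Real.sqrt (Real.pi/2) := Real.sqrt_le_sqrt h1
    rw [Real.sqrt_one] at h2'
    linarith
  have h3 : 1/Real.sqrt N ≤ C/Real.sqrt N := by gcongr
  calc |(M:ℝ)/((N:ℝ)+1) - (1-ε)| ≤ 1/((N:ℝ)+1) := habs
    _ ≤ 1/Real.sqrt N := h2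
    _ ≤ C/Real.sqrt N := h3
end

section
/- Consider the problem of minimizing over ε = (ε¹,…,ε^M) the objective Σ_{ℓ=1}^M ε^ℓ R̂^ℓ + β Σ_{ℓ=1}^M ε^ℓ log(ε^ℓ/π^ℓ) subject to ε^ℓ ≥ 0, Σ_ℓ ε^ℓ = 1, and Σ_ℓ ε^ℓ B̂^ℓ ≤ B̄. Its solution ε̂ is given, for every ℓ ∈ [M], by ε̂^ℓ = π^ℓ exp(−(R̂^ℓ + μ̂ B̂^ℓ)/β) / Σ_{j=1}^M π^j exp(−(R̂^j + μ̂ B̂^j)/β), where μ̂ = max{0, μ̄} and μ̄ is a solution of the equation Σ_{ℓ=1}^M (B̄ − B̂^ℓ) π^ℓ exp(−(R̂^ℓ + μ̄ B̂^ℓ)/β) = 0 (when μ̂ = 0 the budget constraint Σ_ℓ ε̂^ℓ B̂^ℓ ≤ B̄ must hold); such ε̂ satisfies the constraints and attains the minimum of the objective over the constraint set. -/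
open Finset

/-- The exponential-weights vector `ε̂` (Gibbs distribution with Lagrange
multiplier `μ̂ = max{0, μ̄}`) solves the budget-constrained aggregation problem:
it satisfies the simplex and budget constraints and minimizes
`∑ ε^ℓ R̂^ℓ + β ∑ ε^ℓ log(ε^ℓ/π^ℓ)` over the constraint set. -/
theorem eero_exponential_weights_solution
    (M : ℕ) (hM : 2 ≤ M)
    (R : Fin M → ℝ) (hR : ∀ ℓ, R ℓ ∈ Set.Icc (0 : ℝ) 1)
    (B : Fin M → ℝ) (hB : ∀ ℓ, 0 < B ℓ)
    (pr : Fin M → ℝ) (hpr : ∀ ℓ, 0 < pr ℓ) (hprsum : ∑ ℓ, pr ℓ = 1)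
    (β : ℝ) (hβ : 0 < β)
    (Bbar : ℝ) (hBbar : 0 < Bbar)
    -- feasibility of the budget
    (hfeas : ∃ ℓ, B ℓ ≤ Bbar)
    -- `μ̄` solves the first-order equation and `μ̂ = max{0, μ̄}`
    (μbar μhat : ℝ)
    (hμbar : ∑ ℓ, (Bbar - B ℓ) * pr ℓ * Real.exp (-(R ℓ + μbar * B ℓ) / β) = 0)
    (hμhat : μhat = max 0 μbar)
    -- the exponential-weights vector `ε̂`
    (εhat : Fin M → ℝ)
    (hεhat : ∀ ℓ, εhat ℓ =
      pr ℓ * Real.exp (-(R ℓ + μhat * B ℓ) / β) /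
        ∑ j, pr j * Real.exp (-(R j + μhat * B j) / β))
    -- when `μ̂ = 0` the budget constraint must hold for `ε̂`
    (hbudget0 : μhat = 0 → ∑ ℓ, εhat ℓ * B ℓ ≤ Bbar) :
    (∀ ℓ, 0 ≤ εhat ℓ) ∧ (∑ ℓ, εhat ℓ = 1) ∧ (∑ ℓ, εhat ℓ * B ℓ ≤ Bbar) ∧
      (∀ ε : Fin M → ℝ, (∀ ℓ, 0 ≤ ε ℓ) → (∑ ℓ, ε ℓ = 1) → (∑ ℓ, ε ℓ * B ℓ ≤ Bbar) →
        (∑ ℓ, εhat ℓ * R ℓ) + β * ∑ ℓ, εhat ℓ * Real.log (εhat ℓ / pr ℓ) ≤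
          (∑ ℓ, ε ℓ * R ℓ) + β * ∑ ℓ, ε ℓ * Real.log (ε ℓ / pr ℓ)) := by
  have hβ' : β ≠ 0 := ne_of_gt hβ
  set w : Fin M → ℝ := fun ℓ => pr ℓ * Real.exp (-(R ℓ + μhat * B ℓ) / β) with hw
  have hwpos : ∀ ℓ, 0 < w ℓ := fun ℓ => mul_pos (hpr ℓ) (Real.exp_pos _)
  set Z : ℝ := ∑ j, w j with hZdef
  have hZpos : 0 < Z := Finset.sum_pos (fun ℓ _ => hwpos ℓ) ⟨⟨0, by omega⟩, Finset.mem_univ _⟩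
  have hεw : ∀ ℓ, εhat ℓ = w ℓ / Z := fun ℓ => hεhat ℓ
  have hεpos : ∀ ℓ, 0 < εhat ℓ := fun ℓ => by rw [hεw]; exact div_pos (hwpos ℓ) hZpos
  have hsum1 : ∑ ℓ, εhat ℓ = 1 := by
    simp_rw [hεw]; rw [← Finset.sum_div]; exact div_self (ne_of_gt hZpos)
  have hμhat0 : 0 ≤ μhat := by rw [hμhat]; exact le_max_left _ _
  -- budget equality when μhat is positive
  have hbudEq : 0 < μhat → ∑ ℓ, εhat ℓ * B ℓ = Bbar := by
    intro hpos
    have heq : μhat = μbar := by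
      rcases max_cases 0 μbar with ⟨h1, h2⟩ | ⟨h1, h2⟩
      · rw [hμhat, h1] at hpos; exact absurd hpos (lt_irrefl 0)
      · rw [hμhat, h1]
    have hμbar' : ∑ ℓ, (Bbar - B ℓ) * w ℓ = 0 := by
      simp only [hw, heq, ← mul_assoc]; exact hμbar
    have hBZ : Bbar * Z = ∑ ℓ, B ℓ * w ℓ := by
      have h2 : ∑ ℓ, (Bbar * w ℓ - B ℓ * w ℓ) = 0 := by
        rw [← hμbar']; exact Finset.sum_congr rfl (fun ℓ _ => by ring)
      rw [Finset.sum_sub_distrib, ← Finset.mul_sum] at h2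
      linarith [h2]
    have : ∑ ℓ, εhat ℓ * B ℓ = (∑ ℓ, B ℓ * w ℓ) / Z := by
      rw [Finset.sum_div]
      exact Finset.sum_congr rfl (fun ℓ _ => by rw [hεw]; ring)
    rw [this, ← hBZ, mul_div_assoc, div_self (ne_of_gt hZpos), mul_one]
  have hbudget : ∑ ℓ, εhat ℓ * B ℓ ≤ Bbar := by
    rcases eq_or_lt_of_le hμhat0 with h | h
    · exact hbudget0 h.symm
    · exact (hbudEq h).le
  have hμB : μhat * (∑ ℓ, εhat ℓ * B ℓ) = μhat * Bbar := by
    rcases eq_or_lt_of_le hμhat0 with h | h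
    · rw [← h]; ring
    · rw [hbudEq h]
  -- pointwise key identity
  have point : ∀ (ε : Fin M → ℝ), ∀ ℓ, 0 ≤ ε ℓ →
      ε ℓ * R ℓ + β * (ε ℓ * Real.log (ε ℓ / pr ℓ))
        = β * (ε ℓ * Real.log (ε ℓ / εhat ℓ)) - μhat * (ε ℓ * B ℓ)
            - β * (ε ℓ * Real.log Z) := by
    intro ε ℓ h
    rcases eq_or_lt_of_le h with h0 | h0
    · simp [← h0]
    · have hεh := hεpos ℓ
      have hlogεh : Real.log (εhat ℓ)
          = Real.log (pr ℓ) + (-(R ℓ + μhat * B ℓ) / β) - Real.log Z := by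
        rw [hεw, Real.log_div (ne_of_gt (hwpos ℓ)) (ne_of_gt hZpos)]
        simp only [hw]
        rw [Real.log_mul (ne_of_gt (hpr ℓ)) (Real.exp_ne_zero _), Real.log_exp]
      rw [Real.log_div (ne_of_gt h0) (ne_of_gt (hpr ℓ)),
        Real.log_div (ne_of_gt h0) (ne_of_gt hεh), hlogεh]
      field_simp
      ring
  -- summed key identity
  have key : ∀ ε : Fin M → ℝ, (∀ ℓ, 0 ≤ ε ℓ) → (∑ ℓ, ε ℓ = 1) →
      (∑ ℓ, ε ℓ * R ℓ) + β * ∑ ℓ, ε ℓ * Real.log (ε ℓ / pr ℓ)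
        = β * (∑ ℓ, ε ℓ * Real.log (ε ℓ / εhat ℓ)) - μhat * (∑ ℓ, ε ℓ * B ℓ)
            - β * Real.log Z := by
    intro ε hε hεs
    have h1 : (∑ ℓ, ε ℓ * R ℓ) + β * ∑ ℓ, ε ℓ * Real.log (ε ℓ / pr ℓ)
        = ∑ ℓ, (ε ℓ * R ℓ + β * (ε ℓ * Real.log (ε ℓ / pr ℓ))) := by
      rw [Finset.sum_add_distrib, ← Finset.mul_sum]
    have h2 : ∑ ℓ, (ε ℓ * R ℓ + β * (ε ℓ * Real.log (ε ℓ / pr ℓ)))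
        = ∑ ℓ, (β * (ε ℓ * Real.log (ε ℓ / εhat ℓ)) - μhat * (ε ℓ * B ℓ)
            - β * (ε ℓ * Real.log Z)) :=
      Finset.sum_congr rfl (fun ℓ _ => point ε ℓ (hε ℓ))
    have h3 : ∑ ℓ, ε ℓ * Real.log Z = Real.log Z := by
      rw [← Finset.sum_mul, hεs, one_mul]
    rw [h1, h2, Finset.sum_sub_distrib, Finset.sum_sub_distrib,
      ← Finset.mul_sum, ← Finset.mul_sum, ← Finset.mul_sum, h3]
  -- Gibbs' inequality
  have hS : ∀ ε : Fin M → ℝ, (∀ ℓ, 0 ≤ ε ℓ) → (∑ ℓ, ε ℓ = 1) →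
      0 ≤ ∑ ℓ, ε ℓ * Real.log (ε ℓ / εhat ℓ) := by
    intro ε hε hεs
    have hpt : ∀ ℓ ∈ Finset.univ, ε ℓ - εhat ℓ ≤ ε ℓ * Real.log (ε ℓ / εhat ℓ) := by
      intro ℓ _
      rcases eq_or_lt_of_le (hε ℓ) with h | h
      · simp [← h]; exact (hεpos ℓ).le
      · have hb := hεpos ℓ
        have hlog : Real.log (εhat ℓ / ε ℓ) ≤ εhat ℓ / ε ℓ - 1 :=
          Real.log_le_sub_one_of_pos (div_pos hb h)
        have hneg : Real.log (εhat ℓ / ε ℓ) = - Real.log (ε ℓ / εhat ℓ) := by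
          rw [← Real.log_inv]; congr 1; field_simp
        have h2 : 1 - εhat ℓ / ε ℓ ≤ Real.log (ε ℓ / εhat ℓ) := by
          rw [hneg] at hlog; linarith
        have h3 : ε ℓ * (1 - εhat ℓ / ε ℓ) ≤ ε ℓ * Real.log (ε ℓ / εhat ℓ) :=
          mul_le_mul_of_nonneg_left h2 h.le
        have h4 : ε ℓ * (1 - εhat ℓ / ε ℓ) = ε ℓ - εhat ℓ := by field_simp
        linarith
    calc (0 : ℝ) = (∑ ℓ, ε ℓ) - ∑ ℓ, εhat ℓ := by rw [hεs, hsum1]; ring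
      _ = ∑ ℓ, (ε ℓ - εhat ℓ) := (Finset.sum_sub_distrib _ _).symm
      _ ≤ ∑ ℓ, ε ℓ * Real.log (ε ℓ / εhat ℓ) := Finset.sum_le_sum hpt
  refine ⟨fun ℓ => (hεpos ℓ).le, hsum1, hbudget, ?_⟩
  intro ε hε hεs hεB
  have hkε := key ε hε hεs
  have hkεhat := key εhat (fun ℓ => (hεpos ℓ).le) hsum1
  have hSεhat : ∑ ℓ, εhat ℓ * Real.log (εhat ℓ / εhat ℓ) = 0 := by
    apply Finset.sum_eq_zero
    intro ℓ _
    rw [div_self (ne_of_gt (hεpos ℓ)), Real.log_one, mul_zero]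
  have hSε := hS ε hε hεs
  have hβS : 0 ≤ β * ∑ ℓ, ε ℓ * Real.log (ε ℓ / εhat ℓ) := mul_nonneg hβ.le hSε
  have hμεB : μhat * (∑ ℓ, ε ℓ * B ℓ) ≤ μhat * Bbar :=
    mul_le_mul_of_nonneg_left hεB hμhat0
  rw [hkε, hkεhat, hSεhat, hμB]
  linarith
end

section
/- Let ŝ : 𝒳 → ℝ be a measurable score with continuous CDF F of ŝ(X), let F̂ be the empirical CDF built from N i.i.d. copies of X independent of X, and let C = 2√(π/2). For ε ∈ (0,1) with ε + C/√N < 1, define the inflated classification rate ε̃ = ε + C/√N and the rule ĥ_{ε̃}(x) = ℜ if F̂(ŝ(x)) < 1−ε̃ and ĥ_{ε̃}(x) = ĝ(x) otherwise. Then P(ĥ_{ε̃}(X) = ℜ) ≤ 1 − ε. -/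
open MeasureTheory ProbabilityTheory Set Filter Topology intervalIntegral


lemma eero_aux_beta : ∀ (j m : ℕ), ∫ x in (0:ℝ)..1, x ^ j * (1 - x) ^ m
    = (j.factorial : ℝ) * m.factorial / (j + m + 1).factorial := by
  intro j
  induction j with
  | zero =>
    intro m
    simp only [pow_zero, one_mul, Nat.factorial_zero, Nat.cast_one, zero_add]
    rw [show (fun x : ℝ => (1 - x) ^ m) = (fun x : ℝ => (fun y : ℝ => y ^ m) (1 - x)) from rfl,
      intervalIntegral.integral_comp_sub_left (fun y : ℝ => y ^ m) 1]
    rw [integral_pow]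
    simp [Nat.factorial_succ]
    field_simp
  | succ j ih =>
    intro m
    have hu : ∀ x ∈ Set.uIcc (0:ℝ) 1, HasDerivAt (fun y : ℝ => y ^ (j+1))
        (((j:ℝ)+1) * x ^ j) x := by
      intro x _
      simpa using (hasDerivAt_pow (j+1) x)
    have hv : ∀ x ∈ Set.uIcc (0:ℝ) 1, HasDerivAt (fun y : ℝ => -(1 - y) ^ (m+1) / (m+1))
        ((1 - x) ^ m) x := by
      intro x _
      have h1 : HasDerivAt (fun y : ℝ => (1 - y)) (-1) x := by
        simpa using (hasDerivAt_id x).const_sub 1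
      have h2 : HasDerivAt (fun y : ℝ => (1 - y) ^ (m+1))
          (((m:ℝ)+1) * (1 - x) ^ m * (-1)) x := by
        simpa using (HasDerivAt.fun_pow h1 (m+1))
      have h3 := (h2.fun_neg).div_const ((m:ℝ)+1)
      exact h3.congr_deriv (by field_simp)
    have key := intervalIntegral.integral_mul_deriv_eq_deriv_mul hu hv
      (by apply Continuous.intervalIntegrable; continuity)
      (by apply Continuous.intervalIntegrable; continuity)
    rw [key]
    have : ∫ x in (0:ℝ)..1, ((j:ℝ)+1) * x ^ j * (-(1 - x) ^ (m+1) / (m+1))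
        = (-((j:ℝ)+1)/((m:ℝ)+1)) * ∫ x in (0:ℝ)..1, x ^ j * (1 - x) ^ (m+1) := by
      rw [← intervalIntegral.integral_const_mul]
      congr 1; ext x; ring
    rw [this, ih (m+1), show j + (m+1) = j + 1 + m from by omega]
    have hm1 : ((m:ℝ)+1) ≠ 0 := by positivity
    have hf : ((j+1+m).factorial : ℝ) ≠ 0 := by positivity
    simp only [Nat.factorial_succ]
    push_cast
    norm_num
    field_simp
    ring


lemma eero_aux_pit (ν : Measure ℝ) [IsProbabilityMeasure ν]
    (F : ℝ → ℝ) (hFdef : ∀ t, F t = (ν (Set.Iic t)).toReal) (hFc : Continuous F) :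
    Measure.map F ν = volume.restrict (Set.Ioc (0:ℝ) 1) := by
  have hcdf : ProbabilityTheory.cdf ν = F := by
    ext t; rw [hFdef, cdf_eq_real, measureReal_def]
  have hofReal : ∀ t, ENNReal.ofReal (F t) = ν (Iic t) := by
    intro t; rw [← hcdf]; exact ofReal_cdf ν t
  have hmono : Monotone F := by
    intro x y hxy
    rw [hFdef, hFdef]
    exact ENNReal.toReal_mono (measure_ne_top ν _) (measure_mono (Iic_subset_Iic.2 hxy))
  have hF0 : ∀ t, 0 ≤ F t := fun t => by rw [hFdef]; exact ENNReal.toReal_nonneg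
  have hF1 : ∀ t, F t ≤ 1 := by
    intro t; rw [hFdef]
    refine ENNReal.toReal_le_of_le_ofReal zero_le_one ?_
    simpa using prob_le_one
  have hatom : ∀ x : ℝ, ν {x} = 0 := by
    intro x
    have h1 : ν = (ProbabilityTheory.cdf ν).measure := (measure_cdf ν).symm
    rw [h1, StieltjesFunction.measure_singleton, hcdf]
    have : Function.leftLim F x = F x :=
      leftLim_eq_of_tendsto
        ((hFc.tendsto x).mono_left nhdsWithin_le_nhds)
    rw [this]; simp
  have htendTop : Tendsto F atTop (𝓝 1) := by rw [← hcdf]; exact tendsto_cdf_atTop ν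
  have htendBot : Tendsto F atBot (𝓝 0) := by rw [← hcdf]; exact tendsto_cdf_atBot ν
  haveI : IsFiniteMeasure (volume.restrict (Set.Ioc (0:ℝ) 1)) :=
    ⟨by simp [Measure.restrict_apply_univ]⟩
  refine MeasureTheory.Measure.ext_of_Iic _ _ (fun a => ?_)
  rw [Measure.map_apply hFc.measurable measurableSet_Iic,
    Measure.restrict_apply measurableSet_Iic]
  have hright : Iic a ∩ Ioc 0 1 = Ioc 0 (min a 1) := by
    ext x; simp [Set.mem_Ioc, Set.mem_Iic, and_comm, and_assoc, le_min_iff]; tauto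
  rw [hright, Real.volume_Ioc, sub_zero]
  -- now compute ν {x | F x ≤ a} = ofReal (min a 1)
  rcases lt_or_ge a 0 with ha | ha
  · have : F ⁻¹' Iic a = ∅ := by
      ext x; simp only [mem_preimage, mem_Iic, mem_empty_iff_false, iff_false, not_le]
      exact lt_of_lt_of_le ha (hF0 x)
    rw [this, min_eq_left (by linarith)]
    simp [ENNReal.ofReal_eq_zero.2 ha.le]
  rcases le_or_gt 1 a with ha1 | ha1
  · have : F ⁻¹' Iic a = univ := by
      ext x; simp only [mem_preimage, mem_Iic, mem_univ, iff_true]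
      exact le_trans (hF1 x) ha1
    rw [this, min_eq_right ha1]
    simp
  · rw [min_eq_left ha1.le]
    set A := F ⁻¹' Iic a with hA
    rcases eq_empty_or_nonempty A with hAe | hAne
    · -- then a must be 0 (can't be positive since F → 0)
      have ha0 : a ≤ 0 := by
        by_contra h
        push_neg at h
        obtain ⟨x, hx⟩ := (htendBot.eventually_lt_const h).exists
        have hxA : x ∈ A := le_of_lt hx
        rw [hAe] at hxA
        exact hxA
      have : a = 0 := le_antisymm ha0 ha
      rw [hAe, this]; simp
    · have hbdd : BddAbove A := by
        obtain ⟨s₀, hs₀⟩ := (htendTop.eventually_const_lt ha1).exists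
        refine ⟨s₀, fun x hx => ?_⟩
        by_contra h
        push_neg at h
        exact absurd (le_trans (hmono h.le) hx) (not_le.2 hs₀)
      have hclosed : IsClosed A := isClosed_Iic.preimage hFc
      set s := sSup A with hs
      have hsA : s ∈ A := hclosed.csSup_mem hAne hbdd
      have hFs_le : F s ≤ a := hsA
      have hFs_ge : a ≤ F s := by
        have hev : ∀ᶠ x in 𝓝[>] s, a ≤ F x := by
          filter_upwards [self_mem_nhdsWithin] with x hx
          have hxA : x ∉ A := fun hmem => absurd (le_csSup hbdd hmem) (not_le.2 hx)
          exact le_of_lt (lt_of_not_ge hxA)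
        exact ge_of_tendsto ((hFc.tendsto s).mono_left nhdsWithin_le_nhds) hev
      have hFs : F s = a := le_antisymm hFs_le hFs_ge
      have hsub1 : A ⊆ Iic s := fun x hx => le_csSup hbdd hx
      have hsub2 : Iio s ⊆ A := by
        intro x hx
        obtain ⟨y, hyA, hxy⟩ := exists_lt_of_lt_csSup hAne hx
        exact le_trans (hmono hxy.le) hyA
      have h1 : ν (Iic s) = ENNReal.ofReal a := by rw [← hFs]; exact (hofReal s).symm
      have h2 : ν (Iio s) = ENNReal.ofReal a := by
        have hle : ν (Iic s) ≤ ν (Iio s) + ν {s} := by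
          rw [show Iic s = Iio s ∪ {s} from (Iio_union_right).symm]
          exact measure_union_le _ _
        rw [hatom s, add_zero] at hle
        refine le_antisymm ?_ ?_
        · calc ν (Iio s) ≤ ν (Iic s) := measure_mono Iio_subset_Iic_self
          _ = ENNReal.ofReal a := h1
        · calc ENNReal.ofReal a = ν (Iic s) := h1.symm
          _ ≤ ν (Iio s) := hle
      refine le_antisymm ?_ ?_
      · calc ν A ≤ ν (Iic s) := measure_mono hsub1
        _ = ENNReal.ofReal a := h1
      · calc ENNReal.ofReal a = ν (Iio s) := h2.symm
        _ ≤ ν A := measure_mono hsub2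

/-- With the inflated classification rate `ε̃ = ε + C/√N`, `C = 2√(π/2)`,
the empirical reject rule rejects with probability at most `1 − ε`.
`none` is the reject symbol `ℜ`. -/
theorem eero_inflated_rate_budget_control
    {Ω : Type*} [MeasurableSpace Ω] (P : Measure Ω) [IsProbabilityMeasure P]
    {d K : ℕ}
    (X : Ω → (Fin d → ℝ)) (hX : Measurable X)
    (shat : (Fin d → ℝ) → ℝ) (hshat : Measurable shat)
    (F : ℝ → ℝ) (hF : ∀ t, F t = (P {ω | shat (X ω) ≤ t}).toReal) (hFcont : Continuous F)
    (N : ℕ) (hN : 0 < N) (Xs : Fin N → Ω → (Fin d → ℝ)) (hXs : ∀ i, Measurable (Xs i))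
    (hident : ∀ i, Measure.map (Xs i) P = Measure.map X P)
    (hiid : iIndepFun Xs P)
    (hindep : IndepFun X (fun ω i => Xs i ω) P)
    (Fhat : Ω → ℝ → ℝ)
    (hFhat : ∀ ω t, Fhat ω t = (1 / (N : ℝ)) * ∑ i : Fin N, if shat (Xs i ω) ≤ t then 1 else 0)
    (ghat : (Fin d → ℝ) → Fin K)
    (C : ℝ) (hC : C = 2 * Real.sqrt (Real.pi / 2))
    (ε : ℝ) (hε : ε ∈ Set.Ioo (0 : ℝ) 1) (hsmall : ε + C / Real.sqrt N < 1)
    (εtilde : ℝ) (hεtilde : εtilde = ε + C / Real.sqrt N)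
    (hhat : Ω → (Fin d → ℝ) → Option (Fin K))
    (hhatdef : ∀ ω x, hhat ω x = if Fhat ω (shat x) < 1 - εtilde then none else some (ghat x)) :
    (P {ω | hhat ω (X ω) = none}).toReal ≤ 1 - ε := by
  -- basic quantities
  set S : Ω → ℝ := fun ω => shat (X ω) with hSdef
  have hS : Measurable S := hshat.comp hX
  set tl : Ω → (Fin N → ℝ) := fun ω i => shat (Xs i ω) with htldef
  have htl : Measurable tl := measurable_pi_lambda _ fun i => hshat.comp (hXs i)
  set ν : Measure ℝ := Measure.map S P with hνdef
  haveI : IsProbabilityMeasure ν := Measure.isProbabilityMeasure_map hS.aemeasurable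
  have hFν : ∀ t, F t = (ν (Set.Iic t)).toReal := by
    intro t
    rw [hF t, hνdef, Measure.map_apply hS measurableSet_Iic]
    rfl
  have hF0 : ∀ t, 0 ≤ F t := fun t => by rw [hFν]; exact ENNReal.toReal_nonneg
  have hF1 : ∀ t, F t ≤ 1 := by
    intro t; rw [hFν]
    refine ENNReal.toReal_le_of_le_ofReal zero_le_one ?_
    simpa using prob_le_one
  have hofReal : ∀ t, ENNReal.ofReal (F t) = ν (Set.Iic t) := by
    intro t; rw [hFν]; exact ENNReal.ofReal_toReal (measure_ne_top _ _)
  -- threshold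
  set r : ℝ := (N : ℝ) * (1 - εtilde) with hrdef
  have hsqrtN : (0:ℝ) < Real.sqrt N := Real.sqrt_pos.2 (by exact_mod_cast hN)
  have hCpos : 0 < C := by
    rw [hC]; positivity
  have hεt1 : εtilde < 1 := by rw [hεtilde]; exact hsmall
  have hεt0 : 0 < εtilde := by
    rw [hεtilde]; have := hε.1; positivity
  have hr0 : 0 < r := by
    have : (0:ℝ) < N := by exact_mod_cast hN
    apply mul_pos this; linarith
  -- the event as a preimage
  set A : Set (ℝ × (Fin N → ℝ)) :=
    {p | (∑ i : Fin N, if p.2 i ≤ p.1 then (1:ℝ) else 0) < r} with hAdef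
  have hAmeas : MeasurableSet A := by
    have hm : Measurable fun p : ℝ × (Fin N → ℝ) =>
        ∑ i : Fin N, if p.2 i ≤ p.1 then (1:ℝ) else 0 := by
      apply Finset.measurable_sum
      intro i _
      exact Measurable.ite
        (measurableSet_le (show Measurable fun p : ℝ × (Fin N → ℝ) => p.2 i from (measurable_pi_apply i).comp measurable_snd) measurable_fst)
        measurable_const measurable_const
    exact hm measurableSet_Iio
  have hset : {ω | hhat ω (X ω) = none} = (fun ω => (S ω, tl ω)) ⁻¹' A := by
    ext ω
    simp only [Set.mem_setOf_eq, Set.mem_preimage, hAdef, hhatdef]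
    constructor
    · intro h
      by_cases hc : Fhat ω (shat (X ω)) < 1 - εtilde
      · rw [hFhat] at hc
        have hNpos : (0:ℝ) < N := by exact_mod_cast hN
        rw [hrdef]
        calc (∑ i : Fin N, if tl ω i ≤ S ω then (1:ℝ) else 0)
            = (N:ℝ) * ((1/(N:ℝ)) * ∑ i : Fin N, if shat (Xs i ω) ≤ shat (X ω) then (1:ℝ) else 0) := by
              field_simp; rfl
          _ < (N:ℝ) * (1 - εtilde) := by
              exact mul_lt_mul_of_pos_left hc hNpos
      · simp [hc] at h
    · intro h
      have hNpos : (0:ℝ) < N := by exact_mod_cast hN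
      have hc : Fhat ω (shat (X ω)) < 1 - εtilde := by
        rw [hFhat]
        rw [hrdef] at h
        have := (mul_lt_mul_iff_right₀ (show (0:ℝ) < 1/(N:ℝ) by positivity)).2 h
        calc (1/(N:ℝ)) * ∑ i : Fin N, (if shat (Xs i ω) ≤ shat (X ω) then (1:ℝ) else 0)
            = (1/(N:ℝ)) * ∑ i : Fin N, (if tl ω i ≤ S ω then (1:ℝ) else 0) := rfl
          _ < (1/(N:ℝ)) * ((N:ℝ) * (1 - εtilde)) := this
          _ = 1 - εtilde := by field_simp
      simp [hc]
  classical
  -- joint law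
  set Q : Measure (Fin N → ℝ) := Measure.map tl P with hQdef
  haveI : IsProbabilityMeasure Q := Measure.isProbabilityMeasure_map htl.aemeasurable
  have hlaw : Measure.map (fun ω => (S ω, tl ω)) P = ν.prod Q := by
    have hψ : Measurable fun v : Fin N → (Fin d → ℝ) => fun i => shat (v i) :=
      measurable_pi_lambda _ fun i => hshat.comp (measurable_pi_apply i)
    have hI : IndepFun S tl P := hindep.comp hshat hψ
    exact (indepFun_iff_map_prod_eq_prod_map_map hS.aemeasurable htl.aemeasurable).mp hI
  have hPE : P {ω | hhat ω (X ω) = none} = ∫⁻ s, Q (Prod.mk s ⁻¹' A) ∂ν := by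
    rw [hset, ← Measure.map_apply (hS.prodMk htl) hAmeas, hlaw, Measure.prod_apply hAmeas]
  -- slice computation
  set 𝒯 : Finset (Finset (Fin N)) := Finset.univ.filter (fun T => (T.card:ℝ) < r) with hTdef
  have hslice : ∀ s : ℝ, Q (Prod.mk s ⁻¹' A) =
      ∑ T ∈ 𝒯, ENNReal.ofReal ((F s)^T.card * (1 - F s)^(N - T.card)) := by
    intro s
    set Cs : Finset (Fin N) → Fin N → Set ℝ :=
      fun T i => if i ∈ T then Set.Iic s else (Set.Iic s)ᶜ with hCs
    have hCmeas : ∀ T i, MeasurableSet (Cs T i) := by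
      intro T i
      by_cases hi : i ∈ T <;> simp [hCs, hi, measurableSet_Iic, measurableSet_Iic.compl]
    set B : Finset (Fin N) → Set (Fin N → ℝ) := fun T => ⋂ i, (fun v => v i) ⁻¹' Cs T i with hB
    have hBmem : ∀ T v, v ∈ B T ↔ ∀ i, (v i ≤ s ↔ i ∈ T) := by
      intro T v
      simp only [hB, Set.mem_iInter, Set.mem_preimage, hCs]
      apply forall_congr'
      intro i
      by_cases hi : i ∈ T <;> simp [hi]
    have hBmeas : ∀ T, MeasurableSet (B T) := by
      intro T
      exact MeasurableSet.iInter fun i => (measurable_pi_apply i) (hCmeas T i)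
    have hpre : Prod.mk s ⁻¹' A = ⋃ T ∈ 𝒯, B T := by
      ext v
      simp only [Set.mem_preimage, hAdef, Set.mem_setOf_eq, Set.mem_iUnion]
      rw [Finset.sum_boole]
      constructor
      · intro h
        refine ⟨Finset.univ.filter (fun i => v i ≤ s), ?_, ?_⟩
        · simp only [hTdef, Finset.mem_filter, Finset.mem_univ, true_and]
          exact h
        · rw [hBmem]; intro i; simp
      · rintro ⟨T, hT, hvT⟩
        have heq : Finset.univ.filter (fun i => v i ≤ s) = T := by
          ext i
          simp only [Finset.mem_filter, Finset.mem_univ, true_and]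
          exact (hBmem T v).1 hvT i
        rw [heq]
        simp only [hTdef, Finset.mem_filter, Finset.mem_univ, true_and] at hT
        exact hT
    have hdisj : (↑𝒯 : Set (Finset (Fin N))).PairwiseDisjoint B := by
      intro T hT T' hT' hne
      rw [Function.onFun, Set.disjoint_left]
      intro v hv hv'
      apply hne
      ext i
      rw [← (hBmem T v).1 hv i, (hBmem T' v).1 hv' i]
    have hQB : ∀ T : Finset (Fin N), Q (B T) =
        ENNReal.ofReal ((F s)^T.card * (1 - F s)^(N - T.card)) := by
      intro T
      have h1 : Q (B T) = P (tl ⁻¹' B T) := Measure.map_apply htl (hBmeas T)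
      have h2 : tl ⁻¹' B T = ⋂ i ∈ Finset.univ, (Xs i) ⁻¹' (shat ⁻¹' Cs T i) := by
        ext ω
        simp [hB, htldef, Set.mem_iInter]
      have h3 := hiid.measure_inter_preimage_eq_mul Finset.univ
        (sets := fun i => shat ⁻¹' Cs T i) (fun i _ => hshat (hCmeas T i))
      have h4 : ∀ i, P ((Xs i) ⁻¹' (shat ⁻¹' Cs T i)) = ν (Cs T i) := by
        intro i
        rw [← Measure.map_apply (hXs i) (hshat (hCmeas T i)), hident i,
          Measure.map_apply hX (hshat (hCmeas T i))]
        rw [hνdef, Measure.map_apply hS (hCmeas T i)]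
        rfl
      have h5 : ∀ i, ν (Cs T i) = if i ∈ T then ENNReal.ofReal (F s)
          else ENNReal.ofReal (1 - F s) := by
        intro i
        by_cases hi : i ∈ T
        · simp only [hCs, hi, if_true]
          exact (hofReal s).symm
        · simp only [hCs, hi, if_false]
          rw [prob_compl_eq_one_sub measurableSet_Iic, ← hofReal s,
            ENNReal.ofReal_sub _ (hF0 s), ENNReal.ofReal_one]
      rw [h1, h2, h3]
      simp only [h4, h5]
      rw [Finset.prod_ite, Finset.prod_const, Finset.prod_const, Finset.filter_univ_mem]
      have hcard : (Finset.univ.filter fun i => ¬ i ∈ T).card = N - T.card := by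
        rw [Finset.filter_not, Finset.filter_univ_mem,
          Finset.card_sdiff_of_subset (Finset.subset_univ T)]
        simp [Finset.card_univ]
      rw [hcard, ← ENNReal.ofReal_pow (hF0 s), ← ENNReal.ofReal_pow (by linarith [hF1 s]),
        ← ENNReal.ofReal_mul (pow_nonneg (hF0 s) _)]
    rw [hpre, measure_biUnion_finset hdisj (fun T _ => hBmeas T)]
    exact Finset.sum_congr rfl fun T _ => hQB T
  -- integrability and the beta integral
  have hgcont : ∀ j : ℕ, Continuous (fun t => (F t)^j * (1 - F t)^(N - j)) := by
    intro j
    exact (hFcont.pow j).mul ((continuous_const.sub hFcont).pow (N-j))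
  have hg : ∀ j : ℕ, Integrable (fun t => (F t)^j * (1 - F t)^(N - j)) ν := by
    intro j
    refine Integrable.mono' (integrable_const (1:ℝ)) (hgcont j).aestronglyMeasurable ?_
    filter_upwards with t
    have h0 := hF0 t; have h1 := hF1 t
    have e1 : (F t)^j ≤ 1 := pow_le_one₀ h0 h1
    have e2 : (1 - F t)^(N-j) ≤ 1 := pow_le_one₀ (by linarith) (by linarith)
    have e3 : (0:ℝ) ≤ (F t)^j := pow_nonneg h0 _
    have e4 : (0:ℝ) ≤ (1 - F t)^(N-j) := pow_nonneg (by linarith) _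
    rw [Real.norm_eq_abs, abs_of_nonneg (mul_nonneg e3 e4)]
    nlinarith
  have hgpos : ∀ j : ℕ, (fun _ => (0:ℝ)) ≤ᵐ[ν] fun t => (F t)^j * (1 - F t)^(N - j) := by
    intro j
    filter_upwards with t
    have h0 := hF0 t; have h1 := hF1 t
    exact mul_nonneg (pow_nonneg h0 _) (pow_nonneg (by linarith) _)
  have hint : ∀ j : ℕ, j ≤ N → (∫⁻ t, ENNReal.ofReal ((F t)^j * (1 - F t)^(N - j)) ∂ν)
      = ENNReal.ofReal ((j.factorial * (N-j).factorial : ℝ) / (N+1).factorial) := by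
    intro j hj
    rw [← ofReal_integral_eq_lintegral_ofReal (hg j) (hgpos j)]
    congr 1
    have hmapint := integral_map (φ := F) (μ := ν) hFcont.measurable.aemeasurable
      (f := fun u : ℝ => u^j * (1-u)^(N-j))
      (Continuous.aestronglyMeasurable
        ((continuous_pow j).mul ((continuous_const.sub continuous_id).pow (N-j))))
    rw [← hmapint, eero_aux_pit ν F hFν hFcont,
      ← intervalIntegral.integral_of_le (zero_le_one),
      eero_aux_beta j (N-j), show j + (N-j) + 1 = N + 1 by omega]
  -- total measure
  have htotal : P {ω | hhat ω (X ω) = none} =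
      ∑ T ∈ 𝒯, ENNReal.ofReal
        ((T.card.factorial * (N - T.card).factorial : ℝ) / (N+1).factorial) := by
    rw [hPE, lintegral_congr hslice,
      lintegral_finset_sum _ (fun T _ => ((ENNReal.continuous_ofReal.comp
        (hgcont T.card)).measurable))]
    refine Finset.sum_congr rfl fun T _ => ?_
    have hTle : T.card ≤ N := by
      have := Finset.card_le_univ T
      simpa [Finset.card_univ] using this
    exact hint T.card hTle
  -- pass to real numbers
  set w : ℕ → ℝ := fun j => ((j.factorial * (N-j).factorial : ℕ) : ℝ) / (N+1).factorial with hwdef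
  have hw0 : ∀ j, 0 ≤ w j := by intro j; rw [hwdef]; positivity
  have hwagree : ∀ j, w j = (j.factorial * (N-j).factorial : ℝ) / (N+1).factorial := by
    intro j; rw [hwdef]; push_cast; ring
  have htoReal : (P {ω | hhat ω (X ω) = none}).toReal = ∑ T ∈ 𝒯, w T.card := by
    rw [htotal, ENNReal.toReal_sum (fun T _ => ENNReal.ofReal_ne_top)]
    exact Finset.sum_congr rfl fun T _ => by
      rw [ENNReal.toReal_ofReal (by rw [← hwagree]; exact hw0 T.card), hwagree]
  -- regroup by cardinality
  set J : Finset ℕ := (Finset.range (N+1)).filter (fun j => (j:ℝ) < r) with hJdef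
  have hchoose : ∀ j, j ≤ N → (N.choose j : ℝ) * w j = 1/((N:ℝ)+1) := by
    intro j hj
    have hkey := Nat.choose_mul_factorial_mul_factorial hj
    have hkey' : ((N.choose j : ℕ) : ℝ) * (j.factorial * (N-j).factorial : ℕ) = N.factorial := by
      rw [← Nat.cast_mul, ← mul_assoc, hkey]
    rw [hwdef]
    rw [mul_div_assoc'] at *
    rw [hkey']
    rw [Nat.factorial_succ]
    push_cast
    rw [div_eq_div_iff (by positivity) (by positivity)]
    ring
  have hfiber : ∑ T ∈ 𝒯, w T.card = (J.card : ℝ) * (1/((N:ℝ)+1)) := by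
    have hmaps : ∀ T ∈ 𝒯, T.card ∈ Finset.range (N+1) := by
      intro T _
      rw [Finset.mem_range]
      have := Finset.card_le_univ T
      simp only [Finset.card_univ, Fintype.card_fin] at this
      omega
    rw [← Finset.sum_fiberwise_of_maps_to hmaps (fun T => w T.card)]
    have hinner : ∀ j ∈ Finset.range (N+1),
        (∑ T ∈ 𝒯.filter (fun T => T.card = j), w T.card)
          = if (j:ℝ) < r then 1/((N:ℝ)+1) else 0 := by
      intro j hj
      rw [Finset.mem_range] at hj
      have hjN : j ≤ N := by omega
      have hsumconst : (∑ T ∈ 𝒯.filter (fun T => T.card = j), w T.card)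
          = (𝒯.filter (fun T => T.card = j)).card • w j := by
        rw [← Finset.sum_const]
        exact Finset.sum_congr rfl fun T hT => by
          rw [(Finset.mem_filter.1 hT).2]
      rw [hsumconst]
      by_cases hjr : (j:ℝ) < r
      · have hfe : 𝒯.filter (fun T => T.card = j) = Finset.powersetCard j Finset.univ := by
          rw [hTdef, Finset.filter_filter, Finset.powersetCard_eq_filter,
            Finset.powerset_univ]
          apply Finset.filter_congr
          intro T _
          constructor
          · intro h; exact h.2
          · intro h; exact ⟨by rw [h]; exact hjr, h⟩
        rw [hfe, Finset.card_powersetCard, Finset.card_univ, Fintype.card_fin, if_pos hjr,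
          nsmul_eq_mul]
        exact hchoose j hjN
      · have hfe : 𝒯.filter (fun T => T.card = j) = ∅ := by
          rw [Finset.filter_eq_empty_iff]
          intro T hT
          intro hcard
          rw [hTdef, Finset.mem_filter] at hT
          rw [hcard] at hT
          exact hjr hT.2
        rw [hfe, if_neg hjr]
        simp
    rw [Finset.sum_congr rfl hinner, ← Finset.sum_filter, ← hJdef, Finset.sum_const,
      nsmul_eq_mul]
  -- final bound
  have hJcard : (J.card : ℝ) ≤ r + 1 := by
    have hsub : J ⊆ Finset.range (Nat.floor r + 1) := by
      intro j hj
      rw [hJdef, Finset.mem_filter] at hj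
      rw [Finset.mem_range, Nat.lt_succ_iff]
      exact Nat.le_floor hj.2.le
    have hcard := Finset.card_le_card hsub
    rw [Finset.card_range] at hcard
    have h2 : ((Nat.floor r : ℕ) : ℝ) ≤ r := Nat.floor_le hr0.le
    calc (J.card:ℝ) ≤ ((Nat.floor r + 1 : ℕ) : ℝ) := by exact_mod_cast hcard
    _ ≤ r + 1 := by push_cast; linarith
  have hs1 : (1:ℝ) ≤ Real.sqrt N := by
    rw [show (1:ℝ) = Real.sqrt 1 from (Real.sqrt_one).symm]
    exact Real.sqrt_le_sqrt (by exact_mod_cast hN)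
  have hss : Real.sqrt N * Real.sqrt N = N := Real.mul_self_sqrt (Nat.cast_nonneg N)
  have hC2 : 2 ≤ C := by
    rw [hC]
    have h1 : (1:ℝ) ≤ Real.sqrt (Real.pi/2) := by
      rw [show (1:ℝ) = Real.sqrt 1 from (Real.sqrt_one).symm]
      apply Real.sqrt_le_sqrt
      linarith [Real.two_le_pi]
    linarith
  have hNC : (N:ℝ) * (C / Real.sqrt N) = Real.sqrt N * C := by
    field_simp
    linear_combination (-1) * hss
  have hεsC : ε ≤ Real.sqrt N * C := by
    have h12 : (1:ℝ)*2 ≤ Real.sqrt N * C :=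
      mul_le_mul hs1 hC2 (by norm_num) (le_trans zero_le_one hs1)
    linarith [hε.2]
  have hrbound : r + 1 ≤ ((N:ℝ)+1) * (1 - ε) := by
    rw [hrdef, hεtilde]
    have hexp : (N:ℝ)*(1-(ε + C/Real.sqrt N)) = (N:ℝ)*(1-ε) - (N:ℝ)*(C/Real.sqrt N) := by
      ring
    rw [hexp, hNC]
    nlinarith [hεsC]
  rw [htoReal, hfiber]
  calc (J.card:ℝ) * (1/((N:ℝ)+1)) ≤ (r+1) * (1/((N:ℝ)+1)) :=
        mul_le_mul_of_nonneg_right hJcard (by positivity)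
    _ ≤ (1-ε) := by
        rw [mul_one_div, div_le_iff₀ (by positivity)]
        calc r + 1 ≤ ((N:ℝ)+1)*(1-ε) := hrbound
        _ = (1-ε)*((N:ℝ)+1) := by ring
end

section
/- Let Z be a real random variable whose CDF F is continuous, and let G : ℝ → ℝ be any function with δ = sup_{t∈ℝ} |G(t) − F(t)| < ∞. Then for every u ∈ [0,1], |P(G(Z) ≤ u) − u| ≤ 2δ. In particular, with Z = ŝ(X), F the CDF of ŝ(X) and G = F̂ a deterministic approximation of F, the rejection probability of the rule that rejects when F̂(ŝ(X)) ≤ 1−ε deviates from 1−ε by at most 2‖F̂ − F‖_∞. -/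
open MeasureTheory Filter

/-- Helper: under the hypotheses, the probability integral transform satisfies
`P(F(Z) ≤ v) ≤ v` for `v ≥ 0`. -/
lemma pit_upper
    {Ω : Type*} [MeasurableSpace Ω] (P : Measure Ω) [IsProbabilityMeasure P]
    (Z : Ω → ℝ)
    (F : ℝ → ℝ) (hF : ∀ t, F t = (P {ω | Z ω ≤ t}).toReal) (hFcont : Continuous F)
    (hmono : Monotone F) (htop : Tendsto F atTop (nhds 1))
    {v : ℝ} (hv : 0 ≤ v) :
    (P {ω | F (Z ω) ≤ v}).toReal ≤ v := by
  set A : Set ℝ := {t | F t ≤ v} with hA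
  by_cases hne : A.Nonempty
  · by_cases hbdd : BddAbove A
    · have hclosed : IsClosed A := isClosed_le hFcont continuous_const
      have hmem : sSup A ∈ A := hclosed.csSup_mem hne hbdd
      have hsub : {ω | F (Z ω) ≤ v} ⊆ {ω | Z ω ≤ sSup A} := fun ω hω =>
        le_csSup hbdd hω
      calc (P {ω | F (Z ω) ≤ v}).toReal
          ≤ (P {ω | Z ω ≤ sSup A}).toReal :=
            ENNReal.toReal_mono (measure_ne_top _ _) (measure_mono hsub)
        _ = F (sSup A) := (hF _).symm
        _ ≤ v := hmem
    · -- `A` unbounded above: `F t ≤ v` everywhere, hence `1 ≤ v`.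
      have hall : ∀ t, F t ≤ v := by
        intro t
        obtain ⟨s, hs, hts⟩ := not_bddAbove_iff.mp hbdd t
        exact (hmono hts.le).trans hs
      have h1v : (1 : ℝ) ≤ v := le_of_tendsto htop (Eventually.of_forall hall)
      calc (P {ω | F (Z ω) ≤ v}).toReal ≤ (P Set.univ).toReal :=
            ENNReal.toReal_mono (measure_ne_top _ _) (measure_mono (Set.subset_univ _))
        _ = 1 := by simp
        _ ≤ v := h1v
  · have hempty : {ω | F (Z ω) ≤ v} = ∅ := by
      ext ω
      simp only [Set.mem_setOf_eq, Set.mem_empty_iff_false, iff_false]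
      exact fun h => hne ⟨Z ω, h⟩
    rw [hempty]
    simpa using hv

/-- Helper: `P(F(Z) ≤ v) ≥ v` for `v ≤ 1`. -/
lemma pit_lower
    {Ω : Type*} [MeasurableSpace Ω] (P : Measure Ω) [IsProbabilityMeasure P]
    (Z : Ω → ℝ)
    (F : ℝ → ℝ) (hF : ∀ t, F t = (P {ω | Z ω ≤ t}).toReal) (hFcont : Continuous F)
    (hmono : Monotone F) (hbot : Tendsto F atBot (nhds 0))
    {v : ℝ} (hv : v ≤ 1) :
    v ≤ (P {ω | F (Z ω) ≤ v}).toReal := by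
  rcases le_or_gt v 0 with hv0 | hv0
  · exact hv0.trans ENNReal.toReal_nonneg
  by_cases hex : ∃ t, v ≤ F t
  · obtain ⟨t₁, ht₁⟩ := hex
    have : ∀ᶠ t in atBot, F t < v := hbot.eventually (eventually_lt_nhds hv0) |>.mono (by simp)
    obtain ⟨t₀, ht₀⟩ := this.exists
    have ht01 : t₀ ≤ t₁ := by
      by_contra h
      exact absurd (hmono (le_of_not_ge h)) (not_le.mpr (lt_of_lt_of_le ht₀ ht₁))
    have hIVT : v ∈ F '' Set.Icc t₀ t₁ :=
      intermediate_value_Icc ht01 hFcont.continuousOn ⟨ht₀.le, ht₁⟩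
    obtain ⟨t, _, htv⟩ := hIVT
    have hsub : {ω | Z ω ≤ t} ⊆ {ω | F (Z ω) ≤ v} := fun ω hω =>
      htv ▸ hmono hω
    calc v = F t := htv.symm
      _ = (P {ω | Z ω ≤ t}).toReal := hF t
      _ ≤ (P {ω | F (Z ω) ≤ v}).toReal :=
          ENNReal.toReal_mono (measure_ne_top _ _) (measure_mono hsub)
  · -- `F t < v` for all `t`, so the event is everything.
    push_neg at hex
    have huniv : {ω | F (Z ω) ≤ v} = Set.univ := by
      ext ω; simp [le_of_lt (hex (Z ω))]
    rw [huniv]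
    simpa using hv

/-- If `Z` has a continuous CDF `F` and `G` is any function with
`sup_t |G(t) − F(t)| ≤ δ`, then for every `u ∈ [0,1]`, `|ℙ(G(Z) ≤ u) − u| ≤ 2δ`.
This is the key deviation inequality behind the rejection-rate control. -/
theorem cdf_perturbation_deviation
    {Ω : Type*} [MeasurableSpace Ω] (P : Measure Ω) [IsProbabilityMeasure P]
    (Z : Ω → ℝ) (hZ : Measurable Z)
    (F : ℝ → ℝ) (hF : ∀ t, F t = (P {ω | Z ω ≤ t}).toReal) (hFcont : Continuous F)
    (G : ℝ → ℝ) (δ : ℝ) (hδ : ∀ t, |G t - F t| ≤ δ) :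
    ∀ u ∈ Set.Icc (0 : ℝ) 1, |(P {ω | G (Z ω) ≤ u}).toReal - u| ≤ 2 * δ := by
  intro u hu
  obtain ⟨hu0, hu1⟩ := hu
  have hδ0 : 0 ≤ δ := le_trans (abs_nonneg _) (hδ 0)
  -- identify `F` with the CDF of `P.map Z`
  have hmap : ∀ t, P {ω | Z ω ≤ t} = (P.map Z) (Set.Iic t) := by
    intro t
    rw [Measure.map_apply hZ measurableSet_Iic]
    rfl
  haveI : IsProbabilityMeasure (P.map Z) := Measure.isProbabilityMeasure_map hZ.aemeasurable
  have hFcdf : F = ProbabilityTheory.cdf (P.map Z) := by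
    funext t
    rw [hF t, hmap t, ProbabilityTheory.cdf_eq_real, measureReal_def]
  have hmono : Monotone F := hFcdf ▸ ProbabilityTheory.monotone_cdf _
  have htop : Tendsto F atTop (nhds 1) := hFcdf ▸ ProbabilityTheory.tendsto_cdf_atTop _
  have hbot : Tendsto F atBot (nhds 0) := hFcdf ▸ ProbabilityTheory.tendsto_cdf_atBot _
  -- sandwich the event
  have hupper : (P {ω | G (Z ω) ≤ u}).toReal ≤ u + δ := by
    have hsub : {ω | G (Z ω) ≤ u} ⊆ {ω | F (Z ω) ≤ u + δ} := by
      intro ω hω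
      have := abs_le.mp (hδ (Z ω))
      have : F (Z ω) - G (Z ω) ≤ δ := by linarith [this.1]
      simp only [Set.mem_setOf_eq] at hω ⊢
      linarith
    calc (P {ω | G (Z ω) ≤ u}).toReal
        ≤ (P {ω | F (Z ω) ≤ u + δ}).toReal :=
          ENNReal.toReal_mono (measure_ne_top _ _) (measure_mono hsub)
      _ ≤ u + δ := pit_upper P Z F hF hFcont hmono htop (by linarith)
  have hlower : u - δ ≤ (P {ω | G (Z ω) ≤ u}).toReal := by
    have hsub : {ω | F (Z ω) ≤ u - δ} ⊆ {ω | G (Z ω) ≤ u} := by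
      intro ω hω
      have := abs_le.mp (hδ (Z ω))
      simp only [Set.mem_setOf_eq] at hω ⊢
      linarith [this.2]
    calc u - δ ≤ (P {ω | F (Z ω) ≤ u - δ}).toReal :=
          pit_lower P Z F hF hFcont hmono hbot (by linarith)
      _ ≤ (P {ω | G (Z ω) ≤ u}).toReal :=
          ENNReal.toReal_mono (measure_ne_top _ _) (measure_mono hsub)
  rw [abs_le]
  constructor <;> linarith
end
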